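/- arXiv:0809.1266 — 6 statements merged into one kernel-verified Lean document; each statement's English description precedes it below -/
import Mathlib

section
/- Let (n_k) be a strictly increasing sequence of positive integers and let (x_k) be complex numbers with p_{n_k}(n_k · x_k) = 0 for every k. If x_k → x* as k → ∞, then |x*| ≤ 1/r_0. Consequently, every limit point of the zero sets {x ∈ ℂ : p_n(n x) = 0} (as n → ∞) lies in the closed disk of radius 1/r_0 centered at 0. -/
open Complex Metric Finset

lemma appell_coeff_repr (h : ℂ → ℂ) (ρ' ρ : NNReal) (h0 : 0 < ρ') (hlt : ρ' < ρ)
    (hd : DifferentiableOn ℂ h (closedBall 0 (ρ:ℝ))) (x : ℂ) (n : ℕ) :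
    (1 / (2 * (Real.pi:ℂ) * Complex.I)) *
      (∮ t in C(0, (ρ':ℝ)), Complex.exp (x * t) * h t / t ^ (n + 1)) =
      ∑ j ∈ Finset.range (n+1),
        (cauchyPowerSeries h 0 ρ).coeff j * x ^ (n - j) / (Nat.factorial (n - j) : ℂ) := by
  have hρpos : (0:NNReal) < ρ := lt_trans h0 hlt
  have hP : HasFPowerSeriesOnBall h (cauchyPowerSeries h 0 ρ) 0 ρ :=
    hd.hasFPowerSeriesOnBall hρpos
  set c : ℕ → ℂ := (cauchyPowerSeries h 0 ρ).coeff with hc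
  set q : ℕ → ℂ := fun m => ∑ j ∈ Finset.range (m+1), c j * x ^ (m - j) / (Nat.factorial (m - j) : ℂ)
    with hq
  set Q : FormalMultilinearSeries ℂ ℂ ℂ :=
    fun m => ContinuousMultilinearMap.mkPiRing ℂ (Fin m) (q m) with hQdef
  -- summability facts
  have hu : Summable (fun j => ‖c j‖ * (ρ':ℝ) ^ j) := by
    have h1 : (ρ' : ENNReal) < (cauchyPowerSeries h 0 ρ).radius :=
      lt_of_lt_of_le (by exact_mod_cast hlt) hP.r_le
    have := (cauchyPowerSeries h 0 ρ).summable_norm_mul_pow h1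
    simpa [FormalMultilinearSeries.norm_apply_eq_norm_coef] using this
  have hv : Summable (fun m => ‖x‖ ^ m * (ρ':ℝ) ^ m / (Nat.factorial m)) := by
    have := Real.summable_pow_div_factorial (‖x‖ * (ρ':ℝ))
    simpa [mul_pow] using this
  -- norms of convolution summable
  have hvnorm : Summable (fun m => ‖‖x‖ ^ m * (ρ':ℝ) ^ m / (Nat.factorial m)‖) := by
    refine hv.abs.congr fun m => ?_
    rw [Real.norm_eq_abs]
  have hunorm : Summable (fun j => ‖‖c j‖ * (ρ':ℝ) ^ j‖) := by
    refine hu.abs.congr fun j => ?_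
    rw [Real.norm_eq_abs]
  have hconv : Summable (fun m => ∑ k ∈ Finset.range (m+1),
      (‖x‖ ^ k * (ρ':ℝ) ^ k / (Nat.factorial k)) * (‖c (m - k)‖ * (ρ':ℝ) ^ (m - k))) := by
    have := summable_norm_sum_mul_range_of_summable_norm hvnorm hunorm
    refine this.congr fun m => ?_
    rw [Real.norm_eq_abs, _root_.abs_of_nonneg]
    exact Finset.sum_nonneg fun k _ => by positivity
  have hQnorm : Summable (fun m => ‖Q m‖ * (ρ':ℝ) ^ m) := by
    refine Summable.of_nonneg_of_le (fun m => by positivity) (fun m => ?_) hconv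
    have hQm : ‖Q m‖ = ‖q m‖ := ContinuousMultilinearMap.norm_mkPiRing _
    rw [hQm]
    calc ‖q m‖ * (ρ':ℝ) ^ m
        ≤ (∑ j ∈ Finset.range (m+1), ‖c j‖ * ‖x‖ ^ (m - j) / (Nat.factorial (m - j))) * (ρ':ℝ) ^ m := by
          gcongr
          refine (norm_sum_le _ _).trans (le_of_eq ?_)
          refine Finset.sum_congr rfl fun j hj => ?_
          simp [norm_div, norm_mul, norm_pow, Complex.norm_natCast,
            Nat.abs_cast]
      _ = ∑ j ∈ Finset.range (m+1), ‖c j‖ * ‖x‖ ^ (m - j) / (Nat.factorial (m - j)) * (ρ':ℝ) ^ m :=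
          Finset.sum_mul _ _ _
      _ = ∑ k ∈ Finset.range (m+1),
            (‖x‖ ^ k * (ρ':ℝ) ^ k / (Nat.factorial k)) * (‖c (m - k)‖ * (ρ':ℝ) ^ (m - k)) := by
          rw [← Finset.sum_range_reflect]
          refine Finset.sum_congr rfl fun j hj => ?_
          have hjm : j ≤ m := Nat.lt_succ_iff.mp (Finset.mem_range.mp hj)
          have h1 : m + 1 - 1 - j = m - j := by omega
          have h2 : m - (m - j) = j := by omega
          rw [h1, h2]
          have : (ρ':ℝ) ^ m = (ρ':ℝ) ^ (m - j) * (ρ':ℝ) ^ j := by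
            rw [← pow_add]; congr 1; omega
          rw [this]; ring
  have hrle : (ρ' : ENNReal) ≤ Q.radius :=
    FormalMultilinearSeries.le_radius_of_summable _ hQnorm
  have hQsum : ∀ {y : ℂ}, y ∈ Metric.eball (0:ℂ) ρ' →
      HasSum (fun m => Q m fun _ => y) (Complex.exp (x * (0 + y)) * h (0 + y)) := by
    intro y hy
    have hynorm : ‖y‖ < (ρ':ℝ) := by
      simpa [Metric.eball_coe, Metric.mem_ball, dist_zero_right] using hy
    have hA : HasSum (fun m => x ^ m / (Nat.factorial m : ℂ) * y ^ m)
        (Complex.exp (x * y)) := by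
      have h1 := NormedSpace.expSeries_div_hasSum_exp (x * y)
      rw [← Complex.exp_eq_exp_ℂ] at h1
      have hfeq : (fun m => (x*y)^m / (Nat.factorial m : ℂ)) =
          fun m => x ^ m / (Nat.factorial m : ℂ) * y ^ m := by
        funext m; rw [mul_pow]; ring
      rwa [hfeq] at h1
    have hB : HasSum (fun j => c j * y ^ j) (h (0 + y)) := by
      have hy' : y ∈ Metric.eball (0:ℂ) ρ :=
        EMetric.ball_subset_ball (by exact_mod_cast hlt.le) hy
      have h2 := hP.hasSum hy'
      have hfeq : (fun m => (cauchyPowerSeries h 0 ↑ρ) m fun _ => y) =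
          fun m => c m * y ^ m := by
        funext m
        rw [FormalMultilinearSeries.apply_eq_pow_smul_coeff, smul_eq_mul, mul_comm]
      rwa [hfeq] at h2
    have hA' : Summable fun m => ‖x ^ m / (Nat.factorial m : ℂ) * y ^ m‖ := by
      refine (Real.summable_pow_div_factorial (‖x‖ * ‖y‖)).congr fun m => ?_
      rw [norm_mul, norm_div, norm_pow, norm_pow, Complex.norm_natCast, mul_pow]
      ring
    have hB' : Summable fun j => ‖c j * y ^ j‖ := by
      refine Summable.of_nonneg_of_le (fun j => norm_nonneg _) (fun j => ?_) hu
      rw [norm_mul, norm_pow]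
      have hyle := hynorm.le
      gcongr
    have hprod := summable_norm_sum_mul_range_of_summable_norm hA' hB'
    have htsum := tsum_mul_tsum_eq_tsum_sum_range_of_summable_norm hA' hB'
    have hsum2 : HasSum (fun m => ∑ k ∈ Finset.range (m+1),
        (x ^ k / (Nat.factorial k : ℂ) * y ^ k) * (c (m - k) * y ^ (m - k)))
        (Complex.exp (x*y) * h (0+y)) := by
      have hS := hprod.of_norm.hasSum
      rw [← htsum, hA.tsum_eq, hB.tsum_eq] at hS
      exact hS
    have hterm : (fun m => ∑ k ∈ Finset.range (m+1),
        (x ^ k / (Nat.factorial k : ℂ) * y ^ k) * (c (m - k) * y ^ (m - k))) =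
        fun m => Q m fun _ => y := by
      funext m
      have hQy : (Q m fun _ => y) = y ^ m * q m := by
        simp [hQdef, ContinuousMultilinearMap.mkPiRing_apply, smul_eq_mul]
      rw [hQy, hq, Finset.mul_sum, ← Finset.sum_range_reflect]
      refine Finset.sum_congr rfl fun j hj => ?_
      have hjm : j ≤ m := Nat.lt_succ_iff.mp (Finset.mem_range.mp hj)
      have h1 : m + 1 - 1 - j = m - j := by omega
      have h2 : m - (m - j) = j := by omega
      rw [h1, h2]
      have hyy : y ^ m = y ^ (m - j) * y ^ j := by rw [← pow_add]; congr 1; omega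
      rw [hyy]; ring
    rw [← hterm]
    simpa [zero_add] using hsum2
  have hQF : HasFPowerSeriesOnBall (fun t => Complex.exp (x * t) * h t) Q 0 ρ' :=
    ⟨hrle, by exact_mod_cast h0, fun hy => hQsum hy⟩
  have hdF : DifferentiableOn ℂ (fun t => Complex.exp (x * t) * h t)
      (closedBall 0 ((ρ':NNReal):ℝ)) := by
    refine DifferentiableOn.mul ?_ (hd.mono (closedBall_subset_closedBall ?_))
    · exact (Complex.differentiable_exp.comp (differentiable_id.const_mul x)).differentiableOn
    · exact_mod_cast hlt.le
  have hcF : HasFPowerSeriesOnBall (fun t => Complex.exp (x * t) * h t)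
      (cauchyPowerSeries (fun t => Complex.exp (x * t) * h t) 0 ρ') 0 ρ' :=
    hdF.hasFPowerSeriesOnBall h0
  have heq : cauchyPowerSeries (fun t => Complex.exp (x * t) * h t) 0 ρ' = Q :=
    hcF.hasFPowerSeriesAt.eq_formalMultilinearSeries hQF.hasFPowerSeriesAt
  have hint : (∮ t in C(0, (ρ':ℝ)), Complex.exp (x * t) * h t / t ^ (n + 1)) =
      ∮ z in C(0, (ρ':ℝ)), ((1:ℂ) / (z - 0)) ^ n • (z - 0)⁻¹ •
        (Complex.exp (x * z) * h z) := by
    refine circleIntegral.integral_congr (NNReal.coe_nonneg ρ') fun z hz => ?_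
    simp only [sub_zero, smul_eq_mul, one_div, inv_pow]
    rw [pow_succ, div_eq_mul_inv, mul_inv]
    ring
  rw [one_div, hint]
  have happ := cauchyPowerSeries_apply (fun t => Complex.exp (x * t) * h t) 0 (ρ':ℝ) n 1
  rw [heq, smul_eq_mul] at happ
  rw [← happ]
  simp [hQdef, hq, ContinuousMultilinearMap.mkPiRing_apply]

open Filter Topology

/-- With `g`, `r₀`, `p` as in the Appell setup, if `(n_k)` is a
strictly increasing sequence of positive integers, `(x_k)` are complex numbers with
`p_{n_k}(n_k x_k) = 0` for all `k`, and `x_k → x*`, then `|x*| ≤ 1/r₀`; i.e. every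
limit point of the zero sets of `x ↦ pₙ(nx)` lies in the closed disk of radius
`1/r₀` centered at `0`. -/
theorem stmt_6 (g : ℂ → ℂ) (hg : Differentiable ℂ g) (hg0 : g 0 ≠ 0)
    (r0 : ℝ) (hr0pos : 0 < r0)
    (hr0 : IsLeast {r : ℝ | ∃ a : ℂ, g a = 0 ∧ ‖a‖ = r} r0)
    (p : ℕ → ℂ → ℂ)
    (hp : ∀ (n : ℕ) (x : ℂ) (ε : ℝ), 0 < ε → ε < r0 →
      p n x = (1 / (2 * (Real.pi : ℂ) * Complex.I)) *
        ∮ t in C(0, ε), Complex.exp (x * t) / (g t * t ^ (n + 1)))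
    (nk : ℕ → ℕ) (hmono : StrictMono nk) (hpos : ∀ k, 1 ≤ nk k)
    (x : ℕ → ℂ) (hzero : ∀ k, p (nk k) ((nk k : ℂ) * x k) = 0)
    (xstar : ℂ) (hlim : Filter.Tendsto x Filter.atTop (nhds xstar)) :
    ‖xstar‖ ≤ 1 / r0 := by
  by_contra hcon
  push_neg at hcon
  have habs : (0:ℝ) < ‖xstar‖ := lt_trans (by positivity) hcon
  have hxne : xstar ≠ 0 := by
    intro h0; rw [h0] at habs; simp at habs
  have hsr : (‖xstar‖)⁻¹ < r0 := by
    rw [one_div] at hcon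
    calc (‖xstar‖)⁻¹ < (r0⁻¹)⁻¹ := inv_strictAnti₀ (by positivity) hcon
      _ = r0 := inv_inv r0
  set s : ℝ := (‖xstar‖)⁻¹ with hsdef
  have hspos : 0 < s := by positivity
  set ρ'r : ℝ := s + (r0 - s)/3 with hρ'rdef
  set ρr : ℝ := s + 2*(r0 - s)/3 with hρrdef
  have hsρ' : s < ρ'r := by rw [hρ'rdef]; linarith
  have hρ'ρ : ρ'r < ρr := by rw [hρ'rdef, hρrdef]; linarith
  have hρr0 : ρr < r0 := by rw [hρrdef]; linarith
  have hρ'pos : 0 < ρ'r := by linarith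
  have hρpos : 0 < ρr := by linarith
  set ρ' : NNReal := ⟨ρ'r, hρ'pos.le⟩ with hρ'def
  set ρn : NNReal := ⟨ρr, hρpos.le⟩ with hρndef
  have hgne : ∀ t : ℂ, ‖t‖ ≤ ρr → g t ≠ 0 := by
    intro t ht hzt
    have := hr0.2 ⟨t, hzt, rfl⟩
    linarith
  set h : ℂ → ℂ := fun t => (g t)⁻¹ with hhdef
  have hd : DifferentiableOn ℂ h (closedBall 0 ((ρn : NNReal) : ℝ)) := by
    refine (hg.differentiableOn).inv fun t ht => hgne t ?_
    exact (by simpa [Metric.mem_closedBall, Complex.dist_eq] using ht : ‖t‖ ≤ ((ρn:NNReal):ℝ))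
  set c : ℕ → ℂ := (cauchyPowerSeries h 0 ((ρn : NNReal) : ℝ)).coeff with hcdef
  have key : ∀ (n : ℕ) (x' : ℂ), p n x' =
      ∑ j ∈ Finset.range (n+1), c j * x' ^ (n - j) / (Nat.factorial (n - j) : ℂ) := by
    intro n x'
    rw [hp n x' ρ'r hρ'pos (by linarith)]
    have hfun : (fun t => Complex.exp (x' * t) / (g t * t ^ (n+1))) =
        fun t => Complex.exp (x' * t) * h t / t ^ (n+1) := by
      funext t
      rw [hhdef]
      rw [div_eq_mul_inv, div_eq_mul_inv, mul_inv]
      ring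
    rw [show (∮ t in C(0, ρ'r), Complex.exp (x' * t) / (g t * t ^ (n + 1))) =
        ∮ t in C(0, ρ'r), Complex.exp (x' * t) * h t / t ^ (n + 1) from by rw [hfun]]
    exact appell_coeff_repr h ρ' ρn (by exact_mod_cast hρ'pos) (by exact_mod_cast hρ'ρ)
      hd x' n
  have hP : HasFPowerSeriesOnBall h (cauchyPowerSeries h 0 ((ρn : NNReal) : ℝ)) 0 ρn :=
    hd.hasFPowerSeriesOnBall (by exact_mod_cast hρpos)
  have hu : Summable (fun j => ‖c j‖ * ρ'r ^ j) := by
    have h1 : ((ρ' : NNReal) : ENNReal) < (cauchyPowerSeries h 0 ((ρn:NNReal):ℝ)).radius :=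
      lt_of_lt_of_le (by exact_mod_cast hρ'ρ) hP.r_le
    have h2 := (cauchyPowerSeries h 0 ((ρn:NNReal):ℝ)).summable_norm_mul_pow h1
    exact (by simpa [FormalMultilinearSeries.norm_apply_eq_norm_coef, hcdef] using h2 :
      Summable (fun j => ‖c j‖ * ((ρ':NNReal):ℝ) ^ j))
  have hnormlim : Tendsto (fun k => ‖x k‖) atTop (𝓝 (‖xstar‖)) :=
    (continuous_norm.tendsto xstar).comp hlim
  have hρ'inv : ρ'r⁻¹ < ‖xstar‖ := by
    have h1 : s < ρ'r := hsρ'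
    calc ρ'r⁻¹ < s⁻¹ := inv_strictAnti₀ hspos h1
      _ = ‖xstar‖ := by rw [hsdef, inv_inv]
  have hxkne : ∀ᶠ k in atTop, x k ≠ 0 ∧ ‖(x k)⁻¹‖ ≤ ρ'r := by
    filter_upwards [hnormlim.eventually (eventually_gt_nhds hρ'inv)] with k hk
    have h0 : (0:ℝ) < ‖x k‖ := lt_trans (by positivity) hk
    refine ⟨fun h0' => by rw [h0'] at h0; simp at h0, ?_⟩
    rw [norm_inv]
    calc (‖x k‖)⁻¹ ≤ (ρ'r⁻¹)⁻¹ := inv_anti₀ (by positivity) hk.le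
      _ = ρ'r := inv_inv _
  set F : ℕ → ℕ → ℂ := fun k j => c j * ((x k)⁻¹) ^ j *
      (((nk k).descFactorial j : ℂ) / ((nk k : ℂ)) ^ j) with hFdef
  have hnktop : Tendsto (fun k => (nk k : ℝ)) atTop atTop :=
    tendsto_natCast_atTop_atTop.comp hmono.tendsto_atTop
  have claim2 : Tendsto (fun k => ∑' j, F k j) atTop
      (𝓝 (∑' j, c j * (xstar⁻¹) ^ j)) := by
    refine tendsto_tsum_of_dominated_convergence hu ?_ ?_
    · intro j
      have h1 : Tendsto (fun k => ((x k)⁻¹) ^ j) atTop (𝓝 ((xstar⁻¹) ^ j)) :=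
        (hlim.inv₀ hxne).pow j
      have h2 : Tendsto (fun k => (((nk k).descFactorial j : ℂ) / ((nk k:ℂ)) ^ j))
          atTop (𝓝 1) := by
        have hev2 : ∀ᶠ k in atTop, (∏ i ∈ Finset.range j, (1 - (i:ℂ)/(nk k))) =
            (((nk k).descFactorial j : ℂ) / ((nk k:ℂ)) ^ j) := by
          have hjev : ∀ᶠ k in atTop, j ≤ nk k := by
            filter_upwards [Filter.eventually_ge_atTop j] with k hk
            exact le_trans hk hmono.le_apply
          filter_upwards [hjev] with k hjk
          have hn0 : ((nk k : ℂ)) ≠ 0 := Nat.cast_ne_zero.mpr (by have := hpos k; omega)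
          rw [Nat.descFactorial_eq_prod_range, Nat.cast_prod]
          rw [show ((nk k:ℂ))^j = ∏ i ∈ Finset.range j, (nk k : ℂ) from by
            rw [Finset.prod_const, Finset.card_range]]
          rw [← Finset.prod_div_distrib]
          refine Finset.prod_congr rfl fun i hi => ?_
          have hij : i ≤ nk k := le_trans (le_of_lt (Finset.mem_range.mp hi)) hjk
          rw [Nat.cast_sub hij]
          field_simp
        refine Tendsto.congr' hev2 ?_
        have h3 : Tendsto (fun k => ∏ i ∈ Finset.range j, (1 - (i:ℂ)/(nk k))) atTop
            (𝓝 (∏ _i ∈ Finset.range j, (1:ℂ))) := by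
          refine tendsto_finset_prod _ fun i _ => ?_
          have hr : Tendsto (fun k => (i:ℝ)/(nk k)) atTop (𝓝 0) :=
            Tendsto.div_atTop tendsto_const_nhds hnktop
          have hc : Tendsto (fun k => (((i:ℝ)/(nk k) : ℝ) : ℂ)) atTop (𝓝 (((0:ℝ):ℂ))) :=
            (Complex.continuous_ofReal.tendsto _).comp hr
          have heq : (fun k => (((i:ℝ)/(nk k) : ℝ) : ℂ)) = fun k => (i:ℂ)/(nk k) := by
            funext k; push_cast; ring
          rw [heq] at hc
          simpa using tendsto_const_nhds.sub hc
        simpa using h3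
      have h4 := ((tendsto_const_nhds (x := c j) (f := (atTop : Filter ℕ))).mul h1).mul h2
      simpa [hFdef] using h4
    · filter_upwards [hxkne] with k hk
      intro j
      have h1 : ‖((x k)⁻¹) ^ j‖ ≤ ρ'r ^ j := by
        rw [norm_pow]
        exact pow_le_pow_left₀ (norm_nonneg _) hk.2 j
      have h2 : ‖(((nk k).descFactorial j : ℂ) / ((nk k:ℂ)) ^ j)‖ ≤ 1 := by
        rw [norm_div, norm_pow, Complex.norm_natCast, Complex.norm_natCast]
        have hn1 : 1 ≤ nk k := hpos k
        rw [div_le_one (by positivity)]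
        exact_mod_cast Nat.descFactorial_le_pow _ _
      calc ‖F k j‖ = ‖c j‖ * ‖((x k)⁻¹) ^ j‖ *
            ‖(((nk k).descFactorial j : ℂ) / ((nk k:ℂ)) ^ j)‖ := by
            rw [hFdef]; rw [norm_mul, norm_mul]
        _ ≤ ‖c j‖ * ρ'r ^ j * 1 := by gcongr
        _ = ‖c j‖ * ρ'r ^ j := mul_one _
  have claim1 : ∀ᶠ k in atTop, (∑' j, F k j) = 0 := by
    filter_upwards [hxkne] with k hk
    have hxk := hk.1
    have hn1 : 1 ≤ nk k := hpos k
    have hnC : ((nk k : ℕ) : ℂ) ≠ 0 := Nat.cast_ne_zero.mpr (by omega)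
    have htsum : (∑' j, F k j) = ∑ j ∈ Finset.range (nk k + 1), F k j := by
      refine tsum_eq_sum ?_
      intro j hj
      have hjn : nk k < j := by simpa using hj
      rw [hFdef]
      simp [Nat.descFactorial_eq_zero_iff_lt.mpr hjn]
    rw [htsum]
    have hz := hzero k
    rw [key (nk k) (((nk k):ℂ) * x k)] at hz
    have hfactor : ∑ j ∈ Finset.range (nk k + 1), F k j =
        ((Nat.factorial (nk k) : ℂ) / (((nk k):ℂ) * x k)^(nk k)) *
          ∑ j ∈ Finset.range (nk k + 1),
            c j * (((nk k):ℂ) * x k) ^ (nk k - j) / (Nat.factorial (nk k - j) : ℂ) := by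
      rw [Finset.mul_sum]
      refine Finset.sum_congr rfl fun j hj => ?_
      have hjn : j ≤ nk k := Nat.lt_succ_iff.mp (Finset.mem_range.mp hj)
      have hdesc : (Nat.factorial (nk k - j) : ℂ) * (((nk k).descFactorial j : ℂ)) =
          (Nat.factorial (nk k) : ℂ) := by
        exact_mod_cast congrArg (Nat.cast (R := ℂ)) (Nat.factorial_mul_descFactorial hjn)
      have hxpow : (((nk k):ℂ) * x k) ^ (nk k) =
          (((nk k):ℂ) * x k)^(nk k - j) * (((nk k):ℂ) * x k)^j := by
        rw [← pow_add]; congr 1; omega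
      rw [hFdef, hxpow]
      have hfac1 : (Nat.factorial (nk k - j) : ℂ) ≠ 0 :=
        Nat.cast_ne_zero.mpr (Nat.factorial_ne_zero _)
      have hxC : x k ≠ 0 := hxk
      rw [← hdesc, mul_pow]
      field_simp
      have hxj : x k ^ j ≠ 0 := pow_ne_zero _ hxC
      rw [one_div, mul_pow, inv_pow]
      linear_combination (c j * ((nk k).descFactorial j : ℂ) * (nk k : ℂ)^j) * inv_mul_cancel₀ hxj
    rw [hfactor, hz, mul_zero]
  have hEE : (fun k => ∑' j, F k j) =ᶠ[atTop] (fun _ => (0:ℂ)) := claim1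
  have hlim0 : Tendsto (fun k => ∑' j, F k j) atTop (𝓝 0) :=
    Tendsto.congr' hEE.symm tendsto_const_nhds
  have hzero' : (∑' j, c j * (xstar⁻¹)^j) = 0 := tendsto_nhds_unique claim2 hlim0
  have hys : ‖xstar⁻¹‖ = s := by rw [norm_inv, hsdef]
  have hball : xstar⁻¹ ∈ Metric.eball (0:ℂ) ρn := by
    rw [Metric.eball_coe, Metric.mem_ball, dist_zero_right]
    show ‖xstar⁻¹‖ < ((ρn:NNReal):ℝ)
    rw [hys]
    show s < ρr
    linarith
  have hsum := hP.hasSum hball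
  have hfeq : (fun m => (cauchyPowerSeries h 0 ((ρn:NNReal):ℝ)) m fun _ => xstar⁻¹) =
      fun m => c m * (xstar⁻¹) ^ m := by
    funext m
    rw [FormalMultilinearSeries.apply_eq_pow_smul_coeff, smul_eq_mul, mul_comm]
  rw [hfeq] at hsum
  have hval : (∑' j, c j * (xstar⁻¹)^j) = h (0 + xstar⁻¹) := hsum.tsum_eq
  rw [hzero', zero_add] at hval
  have hgx : g (xstar⁻¹) ≠ 0 := hgne _ (by rw [hys]; linarith)
  exact hgx (inv_eq_zero.mp hval.symm)
end

section
/- Let a, β, b_1, …, b_β and J_n be as in the context. Then for every x ∈ ℂ, lim_{n→∞} J_n(a; n x) / n^{β−1} = (b_β/(β−1)!) · ((a x − 1)/a)^{β−1}. In particular, for fixed x with x ≠ 0 and a x ≠ 1, J_n(a; n x) = (b_β/(β−1)!) (n x)^{β−1} ((a x − 1)/(a x))^{β−1} (1 + o(1)) as n → ∞, so J_n(a; n x) has exact order n^{β−1} in n. -/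
/-- The polynomial `J_n(a; z) = ∑_{m=1}^{β} (b_m/(m−1)!) ∑_{p=0}^{m−1}
(−1)^p p! C(m−1,p) C(n+p−1,p) a^{−p} z^{m−1−p}`. -/
noncomputable def Jpoly (a : ℂ) (b : ℕ → ℂ) (β n : ℕ) (z : ℂ) : ℂ :=
  ∑ m ∈ Finset.Icc 1 β, (b m / (Nat.factorial (m - 1) : ℂ)) *
    ∑ p ∈ Finset.range m, (-1 : ℂ) ^ p * (Nat.factorial p : ℂ) *
      (Nat.choose (m - 1) p : ℂ) * (Nat.choose (n + p - 1) p : ℂ) *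
      a ^ (-(p : ℤ)) * z ^ (m - 1 - p)

open Filter Finset
set_option maxRecDepth 8000

lemma inv_nat_tendsto : Tendsto (fun n : ℕ => ((n : ℂ))⁻¹) atTop (nhds 0) := by
  have h := tendsto_one_div_atTop_nhds_zero_nat (𝕜 := ℝ)
  have := (Complex.continuous_ofReal.tendsto (0:ℝ)).comp h
  simpa [Function.comp_def, Complex.ofReal_inv, Complex.ofReal_natCast] using this

lemma lin_tendsto (c : ℂ) : Tendsto (fun n : ℕ => ((n : ℂ) + c) / n) atTop (nhds 1) := by
  have h : Tendsto (fun n : ℕ => 1 + c * ((n:ℂ))⁻¹) atTop (nhds (1 + c * 0)) :=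
    tendsto_const_nhds.add (tendsto_const_nhds.mul inv_nat_tendsto)
  rw [mul_zero, add_zero] at h
  refine h.congr' ?_
  filter_upwards [eventually_ge_atTop 1] with n hn
  have hn0 : (n : ℂ) ≠ 0 := Nat.cast_ne_zero.mpr (by omega)
  field_simp

lemma ascFactorial_prod (n p : ℕ) : n.ascFactorial p = ∏ i ∈ range p, (n + i) := by
  induction p with
  | zero => simp
  | succ k ih => rw [Nat.ascFactorial_succ, Finset.prod_range_succ, ih, mul_comm]

lemma lim1 (p : ℕ) :
    Tendsto (fun n : ℕ => ((Nat.choose (n + p - 1) p : ℕ) : ℂ) / (n : ℂ) ^ p) atTop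
      (nhds (1 / (Nat.factorial p : ℂ))) := by
  have hfac : (Nat.factorial p : ℂ) ≠ 0 := Nat.cast_ne_zero.mpr p.factorial_ne_zero
  have hprod : Tendsto (fun n : ℕ => ∏ i ∈ range p, (((n : ℂ) + i) / n)) atTop
      (nhds (∏ _i ∈ range p, (1:ℂ))) :=
    tendsto_finset_prod _ (fun i _ => lin_tendsto i)
  rw [Finset.prod_const_one] at hprod
  have h := hprod.div_const (Nat.factorial p : ℂ)
  refine h.congr' ?_
  filter_upwards [eventually_ge_atTop 1] with n hn
  have hn0 : (n : ℂ) ≠ 0 := Nat.cast_ne_zero.mpr (by omega)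
  have key : ((Nat.factorial p * Nat.choose (n + p - 1) p : ℕ) : ℂ) =
      ∏ i ∈ range p, ((n : ℂ) + i) := by
    rw [← Nat.ascFactorial_eq_factorial_mul_choose', ascFactorial_prod]
    push_cast
    rfl
  push_cast at key
  simp only [Finset.prod_div_distrib, Finset.prod_const, Finset.card_range, ← key]
  rw [mul_div_assoc, mul_div_cancel_left₀ _ hfac]

lemma lim2 (p k : ℕ) :
    Tendsto (fun n : ℕ => ((Nat.choose (n + p - 1) p : ℕ) : ℂ) / (n : ℂ) ^ (p + k)) atTop
      (nhds (if k = 0 then 1 / (Nat.factorial p : ℂ) else 0)) := by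
  rcases Nat.eq_zero_or_pos k with hk | hk
  · subst hk; simpa using lim1 p
  · rw [if_neg (by omega)]
    have h2 : Tendsto (fun n : ℕ => (((n:ℂ))⁻¹) ^ k) atTop (nhds 0) := by
      have := inv_nat_tendsto.pow k
      rwa [zero_pow (by omega)] at this
    have h := (lim1 p).mul h2
    rw [mul_zero] at h
    refine h.congr fun n => ?_
    rw [pow_add, ← div_div, div_eq_mul_inv (_ / _), inv_pow]

lemma mainlim (a : ℂ) (ha : a ≠ 0) (β : ℕ) (hβ : 1 ≤ β) (b : ℕ → ℂ) (x : ℂ) :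
    Tendsto (fun n : ℕ => Jpoly a b β n ((n : ℂ) * x) / (n : ℂ) ^ (β - 1)) atTop
      (nhds ((b β / (Nat.factorial (β - 1) : ℂ)) * ((a * x - 1) / a) ^ (β - 1))) := by
  set c : ℕ → ℕ → ℂ := fun m p =>
    (b m / (Nat.factorial (m - 1) : ℂ)) * ((-1 : ℂ) ^ p * (Nat.factorial p : ℂ) *
      (Nat.choose (m - 1) p : ℂ) * a ^ (-(p : ℤ)) * x ^ (m - 1 - p)) with hc
  have H : Tendsto
      (fun n : ℕ => ∑ m ∈ Finset.Icc 1 β, ∑ p ∈ Finset.range m,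
        c m p * (((Nat.choose (n + p - 1) p : ℕ) : ℂ) / (n : ℂ) ^ (p + (β - m))))
      atTop
      (nhds (∑ m ∈ Finset.Icc 1 β, ∑ p ∈ Finset.range m,
        c m p * (if β - m = 0 then 1 / (Nat.factorial p : ℂ) else 0))) := by
    refine tendsto_finset_sum _ fun m _ => tendsto_finset_sum _ fun p _ => ?_
    exact (lim2 p (β - m)).const_mul (c m p)
  have Hval : (∑ m ∈ Finset.Icc 1 β, ∑ p ∈ Finset.range m,
      c m p * (if β - m = 0 then 1 / (Nat.factorial p : ℂ) else 0)) =
      (b β / (Nat.factorial (β - 1) : ℂ)) * ((a * x - 1) / a) ^ (β - 1) := by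
    rw [Finset.sum_eq_single_of_mem β (Finset.mem_Icc.mpr ⟨hβ, le_refl β⟩)]
    · have hsimp : ∀ p ∈ Finset.range β,
          c β p * (if β - β = 0 then 1 / (Nat.factorial p : ℂ) else 0) =
          (b β / (Nat.factorial (β - 1) : ℂ)) *
            ((-a⁻¹) ^ p * x ^ (β - 1 - p) * (Nat.choose (β - 1) p : ℂ)) := by
        intro p _
        rw [if_pos (by omega), hc]
        have hfp : (Nat.factorial p : ℂ) ≠ 0 := Nat.cast_ne_zero.mpr p.factorial_ne_zero
        have hz : a ^ (-(p : ℤ)) = (a⁻¹ : ℂ) ^ p := by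
          rw [zpow_neg, ← inv_zpow, zpow_natCast]
        have hneg : (-a⁻¹ : ℂ) ^ p = (-1 : ℂ) ^ p * (a⁻¹) ^ p := by
          rw [← neg_one_mul, mul_pow]
        simp only [hc]
        rw [hz, hneg, mul_one_div, div_eq_iff hfp]
        ring
      rw [Finset.sum_congr rfl hsimp, ← Finset.mul_sum]
      congr 1
      have hrange : β = (β - 1) + 1 := by omega
      have := add_pow (-a⁻¹ : ℂ) x (β - 1)
      rw [← hrange] at this
      rw [← this]
      congr 1
      field_simp
      ring
    · intro m hm hne
      refine Finset.sum_eq_zero fun p _ => ?_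
      rw [if_neg (by simp only [Finset.mem_Icc] at hm; omega), mul_zero]
  rw [Hval] at H
  refine H.congr' ?_
  filter_upwards [eventually_ge_atTop 1] with n hn
  have hn0 : (n : ℂ) ≠ 0 := Nat.cast_ne_zero.mpr (by omega)
  simp only [Jpoly, Finset.sum_div]
  refine Finset.sum_congr rfl fun m hm => ?_
  rw [Finset.mul_sum, Finset.sum_div]
  refine Finset.sum_congr rfl fun p hp => ?_
  simp only [Finset.mem_Icc] at hm
  simp only [Finset.mem_range] at hp
  have e : (n : ℂ) ^ (β - 1) = (n : ℂ) ^ (m - 1 - p) * (n : ℂ) ^ (p + (β - m)) := by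
    rw [← pow_add]; congr 1; omega
  have h1 : (n : ℂ) ^ (m - 1 - p) ≠ 0 := pow_ne_zero _ hn0
  have h2 : (n : ℂ) ^ (p + (β - m)) ≠ 0 := pow_ne_zero _ hn0
  simp only [hc, mul_pow]
  rw [← mul_div_assoc, e, div_eq_div_iff h2 (mul_ne_zero h1 h2)]
  ring

/-- For `a ≠ 0`, `β ≥ 1`, coefficients `b` with `b_β ≠ 0`, and any
`x ∈ ℂ`, `J_n(a; nx)/n^{β−1} → (b_β/(β−1)!)((ax−1)/a)^{β−1}` as `n → ∞`; in
particular, for `x ≠ 0` and `ax ≠ 1`,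
`J_n(a;nx) = (b_β/(β−1)!) (nx)^{β−1} ((ax−1)/(ax))^{β−1} (1+o(1))`, so `J_n(a;nx)`
has exact order `n^{β−1}`. -/
theorem stmt_10 (a : ℂ) (ha : a ≠ 0) (β : ℕ) (hβ : 1 ≤ β) (b : ℕ → ℂ)
    (hbβ : b β ≠ 0) (x : ℂ) :
    Filter.Tendsto (fun n : ℕ => Jpoly a b β n ((n : ℂ) * x) / (n : ℂ) ^ (β - 1))
      Filter.atTop
      (nhds ((b β / (Nat.factorial (β - 1) : ℂ)) * ((a * x - 1) / a) ^ (β - 1))) ∧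
    (x ≠ 0 → a * x ≠ 1 →
      ∃ E : ℕ → ℂ, Filter.Tendsto E Filter.atTop (nhds 0) ∧
        ∀ n : ℕ, 1 ≤ n →
          Jpoly a b β n ((n : ℂ) * x) =
            (b β / (Nat.factorial (β - 1) : ℂ)) * ((n : ℂ) * x) ^ (β - 1) *
              ((a * x - 1) / (a * x)) ^ (β - 1) * (1 + E n)) := by
  refine ⟨mainlim a ha β hβ b x, ?_⟩
  intro hx hax
  set K : ℂ := b β / (Nat.factorial (β - 1) : ℂ) with hK
  set C : ℂ := K * ((a * x - 1) / a) ^ (β - 1) with hCdef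
  have hK0 : K ≠ 0 := div_ne_zero hbβ (Nat.cast_ne_zero.mpr (β - 1).factorial_ne_zero)
  have hax0 : a * x ≠ 0 := mul_ne_zero ha hx
  have hC0 : C ≠ 0 := by
    refine mul_ne_zero hK0 (pow_ne_zero _ (div_ne_zero ?_ ha))
    exact sub_ne_zero.mpr hax
  set D : ℕ → ℂ := fun n => K * ((n : ℂ) * x) ^ (β - 1) * ((a * x - 1) / (a * x)) ^ (β - 1)
    with hD
  have hDn : ∀ n : ℕ, D n = C * (n : ℂ) ^ (β - 1) := by
    intro n
    have key : ((n : ℂ) * x) * ((a * x - 1) / (a * x)) = (n : ℂ) * ((a * x - 1) / a) := by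
      field_simp
    calc D n = K * ((((n : ℂ) * x) * ((a * x - 1) / (a * x))) ^ (β - 1)) := by
          simp only [hD]
          rw [mul_assoc, ← mul_pow]
      _ = K * (((n : ℂ) * ((a * x - 1) / a)) ^ (β - 1)) := by rw [key]
      _ = C * (n : ℂ) ^ (β - 1) := by rw [mul_pow, hCdef]; ring
  refine ⟨fun n => if n = 0 then 0 else Jpoly a b β n ((n : ℂ) * x) / D n - 1, ?_, ?_⟩
  · have h1 := ((mainlim a ha β hβ b x).div_const C).sub
      (tendsto_const_nhds (α := ℕ) (x := (1 : ℂ)) (f := Filter.atTop))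
    rw [← hCdef, div_self hC0, sub_self] at h1
    refine h1.congr' ?_
    filter_upwards [Filter.eventually_ge_atTop 1] with n hn
    have hne : n ≠ 0 := by omega
    simp only [hne, if_neg, ite_false]
    rw [hDn, mul_comm C, div_div]
  · intro n hn
    have hne : n ≠ 0 := by omega
    have hDne : D n ≠ 0 := by
      rw [hDn]
      exact mul_ne_zero hC0 (pow_ne_zero _ (Nat.cast_ne_zero.mpr hne))
    have : K * ((n : ℂ) * x) ^ (β - 1) * ((a * x - 1) / (a * x)) ^ (β - 1) = D n := rfl
    rw [this]
    simp only [hne, ite_false]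
    rw [add_sub_cancel, mul_div_cancel₀ _ hDne]
end

section
/- Let S = {z ∈ ℂ : |φ(z)| = 1 and |z| ≤ 1} be the Szegő curve. For any two distinct nonzero complex numbers a and b, the set {x ∈ ℂ : a x ∈ S and b x ∈ S} (i.e., the intersection of the scaled Szegő curves (1/a)S and (1/b)S) contains at most two points. -/
open Real Set

/-- The Szegő curve `S = {z : |z e^{1−z}| = 1 ∧ |z| ≤ 1}`. -/
def SzegoCurve : Set ℂ :=
  {z : ℂ | ‖z * Complex.exp (1 - z)‖ = 1 ∧ ‖z‖ ≤ 1}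

/-- The condition satisfied by the parameter of a point on the scaled Szegő curve. -/
private def SzCond (A B C c₀ c₁ t : ℝ) : Prop :=
  A*t^2 + B*t + C = Real.exp (2*(c₀ + c₁*t - 1)) ∧ c₀ + c₁*t ≤ 1

private lemma haux_deriv (A B C c₀ c₁ : ℝ) (t : ℝ) :
    HasDerivAt (fun t => A*t^2 + B*t + C - Real.exp (2*(c₀ + c₁*t - 1)))
      (2*A*t + B - 2*c₁ * Real.exp (2*(c₀ + c₁*t - 1))) t := by
  have hlin : HasDerivAt (fun t : ℝ => 2*(c₀ + c₁*t - 1)) (2*c₁) t := by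
    simpa using ((((hasDerivAt_id t).const_mul c₁).const_add c₀).sub_const 1).const_mul 2
  have hexp := (Real.hasDerivAt_exp (2*(c₀ + c₁*t - 1))).comp t hlin
  have hpoly : HasDerivAt (fun t : ℝ => A*t^2 + B*t + C) (2*A*t + B) t := by
    have h1 : HasDerivAt (fun t : ℝ => A*t^2) (A*(2*t^1)) t :=
      (hasDerivAt_pow 2 t).const_mul A
    have h2 : HasDerivAt (fun t : ℝ => B*t) (B*1) t := (hasDerivAt_id t).const_mul B
    exact ((h1.add h2).add_const C).congr_deriv (by ring)
  exact (hpoly.sub hexp).congr_deriv (by ring)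

private lemma haux_deriv2 (A B C c₀ c₁ : ℝ) (t : ℝ) :
    HasDerivAt (fun t => 2*A*t + B - 2*c₁ * Real.exp (2*(c₀ + c₁*t - 1)))
      (2*A - 4*c₁^2 * Real.exp (2*(c₀ + c₁*t - 1))) t := by
  have hlin : HasDerivAt (fun t : ℝ => 2*(c₀ + c₁*t - 1)) (2*c₁) t := by
    simpa using ((((hasDerivAt_id t).const_mul c₁).const_add c₀).sub_const 1).const_mul 2
  have hexp := ((Real.hasDerivAt_exp (2*(c₀ + c₁*t - 1))).comp t hlin).const_mul (2*c₁)
  have hpoly : HasDerivAt (fun t : ℝ => 2*A*t + B) (2*A) t := by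
    simpa using ((hasDerivAt_id t).const_mul (2*A)).add_const B
  exact (hpoly.sub hexp).congr_deriv (by ring)

private lemma haux_deriv3 (A B C c₀ c₁ : ℝ) (t : ℝ) :
    HasDerivAt (fun t => 2*A - 4*c₁^2 * Real.exp (2*(c₀ + c₁*t - 1)))
      (-(8*c₁^3 * Real.exp (2*(c₀ + c₁*t - 1)))) t := by
  have hlin : HasDerivAt (fun t : ℝ => 2*(c₀ + c₁*t - 1)) (2*c₁) t := by
    simpa using ((((hasDerivAt_id t).const_mul c₁).const_add c₀).sub_const 1).const_mul 2
  have hexp := ((Real.hasDerivAt_exp (2*(c₀ + c₁*t - 1))).comp t hlin).const_mul (4*c₁^2)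
  have := (hasDerivAt_const t (2*A)).sub hexp
  exact this.congr_deriv (by ring)

/-- Core analytic lemma, positive slope case. -/
private lemma core_pos (A B C c₀ c₁ : ℝ) (hA : 0 < A) (hc : 0 < c₁)
    (hQ : ∀ t, (c₀ + c₁*t)^2 ≤ A*t^2 + B*t + C)
    (s₁ s₂ s₃ : ℝ) (h12 : s₁ < s₂) (h23 : s₂ < s₃)
    (e1 : SzCond A B C c₀ c₁ s₁) (e2 : SzCond A B C c₀ c₁ s₂)
    (e3 : SzCond A B C c₀ c₁ s₃) : False := by
  set H : ℝ → ℝ := fun t => A*t^2 + B*t + C - Real.exp (2*(c₀ + c₁*t - 1)) with hH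
  set D : ℝ → ℝ := fun t => 2*A*t + B - 2*c₁ * Real.exp (2*(c₀ + c₁*t - 1)) with hD
  have hderiv : ∀ t, HasDerivAt H (D t) t := haux_deriv A B C c₀ c₁
  have hcont : Continuous H := by
    simp only [hH]
    fun_prop
  have hz1 : H s₁ = 0 := by simp [hH, e1.1]
  have hz2 : H s₂ = 0 := by simp [hH, e2.1]
  have hz3 : H s₃ = 0 := by simp [hH, e3.1]
  obtain ⟨u₁, hu₁m, hu₁⟩ := exists_hasDerivAt_eq_zero h12 hcont.continuousOn
    (by rw [hz1, hz2]) (fun x _ => hderiv x)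
  obtain ⟨u₂, hu₂m, hu₂⟩ := exists_hasDerivAt_eq_zero h23 hcont.continuousOn
    (by rw [hz2, hz3]) (fun x _ => hderiv x)
  have hu12 : u₁ < u₂ := hu₁m.2.trans hu₂m.1
  -- D is strictly concave
  have hDcont : Continuous D := by
    simp only [hD]
    fun_prop
  have hderivD : deriv D = fun t => 2*A - 4*c₁^2 * Real.exp (2*(c₀ + c₁*t - 1)) :=
    funext fun t => (haux_deriv2 A B C c₀ c₁ t).deriv
  have hconc : StrictConcaveOn ℝ univ D := by
    apply strictConcaveOn_univ_of_deriv2_neg hDcont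
    intro x
    show deriv (deriv D) x < 0
    rw [hderivD, (haux_deriv3 A B C c₀ c₁ x).deriv]
    have : 0 < 8*c₁^3 * Real.exp (2*(c₀ + c₁*x - 1)) := by positivity
    linarith
  -- D is negative beyond u₂
  have hkey : ∀ t, u₂ < t → D t < 0 := by
    intro t ht
    have h1 : (0:ℝ) < (t - u₂)/(t - u₁) := by
      apply div_pos <;> linarith
    have h2 : (0:ℝ) < (u₂ - u₁)/(t - u₁) := by
      apply div_pos <;> linarith
    have h3 : (t - u₂)/(t - u₁) + (u₂ - u₁)/(t - u₁) = 1 := by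
      rw [← add_div]
      have htu : t - u₁ ≠ 0 := by linarith
      field_simp
      ring
    have h4 : ((t - u₂)/(t - u₁)) • u₁ + ((u₂ - u₁)/(t - u₁)) • t = u₂ := by
      have htu : t - u₁ ≠ 0 := by linarith
      simp only [smul_eq_mul]
      field_simp
      ring
    have := hconc.2 (mem_univ u₁) (mem_univ t) (by linarith : u₁ ≠ t) h1 h2 h3
    rw [h4, hu₂, hu₁] at this
    simp only [smul_eq_mul, mul_zero, zero_add] at this
    by_contra hDt
    push_neg at hDt
    nlinarith [mul_nonneg h2.le hDt]
  -- case split on whether the largest zero saturates the constraint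
  rcases eq_or_lt_of_le e3.2 with heq | hlt
  · -- tangency case: the curve meets the constraint line exactly at s₃, forcing D s₃ = 0
    set P : ℝ → ℝ := fun t => A*t^2 + B*t + C - (c₀ + c₁*t)^2 with hP
    have hexp0 : Real.exp (2*(c₀ + c₁*s₃ - 1)) = 1 := by
      rw [heq]; norm_num
    have hQ1 : A*s₃^2 + B*s₃ + C = 1 := by rw [e3.1, hexp0]
    have hPs : P s₃ = 0 := by
      show A*s₃^2 + B*s₃ + C - (c₀ + c₁*s₃)^2 = 0
      rw [hQ1, heq]; norm_num
    have hPmin : IsLocalMin P s₃ := by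
      apply IsMinOn.isLocalMin (s := univ) _ (by simp)
      intro t _
      show P s₃ ≤ A*t^2 + B*t + C - (c₀ + c₁*t)^2
      rw [hPs]
      linarith [hQ t]
    have hPd : HasDerivAt P (2*A*s₃ + B - 2*c₁*(c₀ + c₁*s₃)) s₃ := by
      have h1 : HasDerivAt (fun t : ℝ => A*t^2 + B*t + C) (2*A*s₃ + B) s₃ := by
        have ha' : HasDerivAt (fun t : ℝ => A*t^2) (A*(2*s₃^1)) s₃ :=
          (hasDerivAt_pow 2 s₃).const_mul A
        have hb' : HasDerivAt (fun t : ℝ => B*t) (B*1) s₃ := (hasDerivAt_id s₃).const_mul B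
        exact ((ha'.add hb').add_const C).congr_deriv (by ring)
      have h2 : HasDerivAt (fun t : ℝ => (c₀ + c₁*t)^2) (2*(c₀ + c₁*s₃)^1 * c₁) s₃ := by
        have hl : HasDerivAt (fun t : ℝ => c₀ + c₁*t) c₁ s₃ := by
          simpa using ((hasDerivAt_id s₃).const_mul c₁).const_add c₀
        exact (hasDerivAt_pow 2 (c₀ + c₁*s₃)).comp s₃ hl
      exact (h1.sub h2).congr_deriv (by ring)
    have h0 := hPmin.hasDerivAt_eq_zero hPd
    have hDs₃ : D s₃ = 0 := by
      show 2*A*s₃ + B - 2*c₁ * Real.exp (2*(c₀ + c₁*s₃ - 1)) = 0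
      rw [hexp0, heq] at *
      rw [hexp0]
      linarith
    exact absurd hDs₃ (ne_of_lt (hkey s₃ hu₂m.2))
  · -- transversal case: use MVT between s₃ and T
    set T : ℝ := (1 - c₀)/c₁ with hT
    have hT3 : s₃ < T := by
      rw [hT, lt_div_iff₀ hc]
      linarith
    have hlT : c₀ + c₁*T = 1 := by
      rw [hT]
      field_simp
      ring
    have hexpT : Real.exp (2*(c₀ + c₁*T - 1)) = 1 := by
      rw [hlT]; norm_num
    have hHT : 0 ≤ H T := by
      have h := hQ T
      rw [hlT] at h
      show (0:ℝ) ≤ A*T^2 + B*T + C - Real.exp (2*(c₀ + c₁*T - 1))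
      rw [hexpT]
      nlinarith
    obtain ⟨ξ, hξm, hξ⟩ := exists_hasDerivAt_eq_slope H D hT3 hcont.continuousOn
      (fun x _ => hderiv x)
    have hneg := hkey ξ (hu₂m.2.trans hξm.1)
    rw [hz3] at hξ
    have hTs : 0 < T - s₃ := by linarith
    have : 0 ≤ D ξ := by
      rw [hξ]
      apply div_nonneg <;> linarith
    linarith

/-- Core lemma, sorted points, any slope. -/
private lemma core_sorted (A B C c₀ c₁ : ℝ) (hA : 0 < A)
    (hQ : ∀ t, (c₀ + c₁*t)^2 ≤ A*t^2 + B*t + C)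
    (s₁ s₂ s₃ : ℝ) (h12 : s₁ < s₂) (h23 : s₂ < s₃)
    (e1 : SzCond A B C c₀ c₁ s₁) (e2 : SzCond A B C c₀ c₁ s₂)
    (e3 : SzCond A B C c₀ c₁ s₃) : False := by
  rcases lt_trichotomy c₁ 0 with hc | hc | hc
  · -- reflect t ↦ -t and use the positive case
    have hQ' : ∀ t, (c₀ + (-c₁)*t)^2 ≤ A*t^2 + (-B)*t + C := by
      intro t
      have := hQ (-t)
      nlinarith [hQ (-t)]
    have conv : ∀ s : ℝ, SzCond A B C c₀ c₁ s → SzCond A (-B) C c₀ (-c₁) (-s) := by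
      intro s hs
      constructor
      · have h := hs.1
        have harg : 2*(c₀ + -c₁*(-s) - 1) = 2*(c₀ + c₁*s - 1) := by ring
        rw [harg]
        rw [← h]
        ring
      · have := hs.2
        nlinarith [hs.2]
    exact core_pos A (-B) C c₀ (-c₁) hA (by linarith) hQ' (-s₃) (-s₂) (-s₁)
      (by linarith) (by linarith) (conv s₃ e3) (conv s₂ e2) (conv s₁ e1)
  · -- c₁ = 0 : genuine quadratic has at most two roots
    subst hc
    have k12 : (s₁ - s₂) * (A*(s₁ + s₂) + B) = 0 := by
      have h1 := e1.1
      have h2 := e2.1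
      ring_nf at h1 h2
      linear_combination h1 - h2
    have k23 : (s₂ - s₃) * (A*(s₂ + s₃) + B) = 0 := by
      have h2 := e2.1
      have h3 := e3.1
      ring_nf at h2 h3
      linear_combination h2 - h3
    have q12 : A*(s₁ + s₂) + B = 0 :=
      (mul_eq_zero.1 k12).resolve_left (by intro h; linarith [sub_eq_zero.1 h])
    have q23 : A*(s₂ + s₃) + B = 0 :=
      (mul_eq_zero.1 k23).resolve_left (by intro h; linarith [sub_eq_zero.1 h])
    nlinarith [mul_pos hA (show (0:ℝ) < s₃ - s₁ by linarith)]
  · exact core_pos A B C c₀ c₁ hA hc hQ s₁ s₂ s₃ h12 h23 e1 e2 e3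

/-- Core lemma, three distinct points. -/
private lemma core_distinct (A B C c₀ c₁ : ℝ) (hA : 0 < A)
    (hQ : ∀ t, (c₀ + c₁*t)^2 ≤ A*t^2 + B*t + C)
    (t₁ t₂ t₃ : ℝ)
    (e1 : SzCond A B C c₀ c₁ t₁) (e2 : SzCond A B C c₀ c₁ t₂)
    (e3 : SzCond A B C c₀ c₁ t₃)
    (d12 : t₁ ≠ t₂) (d13 : t₁ ≠ t₃) (d23 : t₂ ≠ t₃) : False := by
  rcases d12.lt_or_gt with h | h <;> rcases d13.lt_or_gt with h' | h' <;>
    rcases d23.lt_or_gt with h'' | h''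
  · exact core_sorted A B C c₀ c₁ hA hQ t₁ t₂ t₃ h h'' e1 e2 e3
  · exact core_sorted A B C c₀ c₁ hA hQ t₁ t₃ t₂ h' h'' e1 e3 e2
  · linarith
  · exact core_sorted A B C c₀ c₁ hA hQ t₃ t₁ t₂ h' h e3 e1 e2
  · exact core_sorted A B C c₀ c₁ hA hQ t₂ t₁ t₃ h h' e2 e1 e3
  · linarith
  · exact core_sorted A B C c₀ c₁ hA hQ t₂ t₃ t₁ h'' h' e2 e3 e1
  · exact core_sorted A B C c₀ c₁ hA hQ t₃ t₂ t₁ h'' h e3 e2 e1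

/-- A set with no three pairwise-distinct elements is contained in a pair. -/
private lemma subset_pair {α : Type*} [Nonempty α] {s : Set α}
    (h : ∀ x ∈ s, ∀ y ∈ s, ∀ z ∈ s, x = y ∨ x = z ∨ y = z) :
    ∃ p q : α, s ⊆ {p, q} := by
  classical
  by_cases hs : ∃ p ∈ s, ∃ q ∈ s, p ≠ q
  · obtain ⟨p, hp, q, hq, hpq⟩ := hs
    refine ⟨p, q, fun z hz => ?_⟩
    rcases h z hz p hp q hq with h1 | h1 | h1
    · exact Or.inl h1
    · exact Or.inr h1
    · exact absurd h1 hpq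
  · push_neg at hs
    by_cases he : ∃ p, p ∈ s
    · obtain ⟨p, hp⟩ := he
      exact ⟨p, p, fun z hz => Or.inl (hs z hz p hp)⟩
    · push_neg at he
      obtain ⟨p⟩ := ‹Nonempty α›
      exact ⟨p, p, fun z hz => absurd hz (he z)⟩

private lemma expand_normSq (p q : ℂ) (t : ℝ) :
    Complex.normSq (p + (t:ℂ)*q) =
      Complex.normSq q * t^2 + (2*(p * (starRingEnd ℂ) q).re) * t + Complex.normSq p := by
  simp [Complex.normSq_apply, Complex.add_re, Complex.add_im, Complex.mul_re, Complex.mul_im]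
  ring

private lemma expand_re (p q : ℂ) (t : ℝ) : (p + (t:ℂ)*q).re = p.re + q.re * t := by
  simp [Complex.add_re, Complex.mul_re]
  ring

private lemma szego_abs {z : ℂ} (hz : z ∈ SzegoCurve) :
    ‖z‖ = Real.exp (z.re - 1) ∧ z.re ≤ 1 := by
  obtain ⟨h1, h2⟩ := hz
  rw [norm_mul, Complex.norm_exp] at h1
  have harg : (1 - z).re = 1 - z.re := by simp
  rw [harg] at h1
  have hepos := Real.exp_pos (1 - z.re)
  have habs : ‖z‖ = Real.exp (z.re - 1) := by
    have h3 : ‖z‖ = (Real.exp (1 - z.re))⁻¹ := by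
      field_simp
      linarith [h1]
    rw [h3, ← Real.exp_neg]
    ring_nf
  refine ⟨habs, ?_⟩
  rw [habs] at h2
  have := Real.exp_le_one_iff.mp h2
  linarith

private lemma szego_normSq {z : ℂ} (hz : z ∈ SzegoCurve) :
    Complex.normSq z = Real.exp (2*(z.re - 1)) := by
  have h := (szego_abs hz).1
  rw [← Complex.sq_norm, h, pow_two, ← Real.exp_add]
  ring_nf

/-- For any two distinct nonzero complex numbers `a` and `b`, the
intersection of the scaled Szegő curves `(1/a)S` and `(1/b)S`, i.e. the set
`{x : ax ∈ S ∧ bx ∈ S}`, contains at most two points. -/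
theorem stmt_12 (a b : ℂ) (ha : a ≠ 0) (hb : b ≠ 0) (hab : a ≠ b) :
    ∃ p q : ℂ, {x : ℂ | a * x ∈ SzegoCurve ∧ b * x ∈ SzegoCurve} ⊆ {p, q} := by
  classical
  set w : ℂ := a - b with hw
  have hw0 : w ≠ 0 := sub_ne_zero.2 hab
  set c : ℝ := Real.log ‖a‖ - Real.log ‖b‖ with hc
  set p : ℂ := (c:ℂ) * a / w with hp
  set q : ℂ := Complex.I * a / w with hq
  have hq0 : q ≠ 0 := div_ne_zero (mul_ne_zero Complex.I_ne_zero ha) hw0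
  have hA : 0 < Complex.normSq q := Complex.normSq_pos.2 hq0
  set A : ℝ := Complex.normSq q with hAdef
  set B : ℝ := 2*(p * (starRingEnd ℂ) q).re with hBdef
  set C : ℝ := Complex.normSq p with hCdef
  have hQ : ∀ t, (p.re + q.re*t)^2 ≤ A*t^2 + B*t + C := by
    intro t
    have h1 := expand_normSq p q t
    have h2 := expand_re p q t
    have h3 : ((p + (t:ℂ)*q).re)^2 ≤ Complex.normSq (p + (t:ℂ)*q) := by
      rw [Complex.normSq_apply]
      nlinarith [sq_nonneg (p + (t:ℂ)*q).im]
    rw [h2, h1] at h3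
    rw [hAdef, hBdef, hCdef]
    linarith
  have key : ∀ x ∈ {x : ℂ | a * x ∈ SzegoCurve ∧ b * x ∈ SzegoCurve},
      a*x = p + (((w*x).im : ℝ):ℂ)*q ∧ SzCond A B C p.re q.re ((w*x).im) := by
    intro x hx
    obtain ⟨hax, hbx⟩ := hx
    obtain ⟨ha1, ha2⟩ := szego_abs hax
    obtain ⟨hb1, hb2⟩ := szego_abs hbx
    have hx0 : x ≠ 0 := by
      intro h
      rw [h, mul_zero] at ha1
      rw [norm_zero] at ha1
      exact absurd ha1.symm (ne_of_gt (Real.exp_pos _))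
    have hax0 : ‖a‖ ≠ 0 := by simpa using ha
    have hbx0 : ‖b‖ ≠ 0 := by simpa using hb
    have hxx0 : ‖x‖ ≠ 0 := by simpa using hx0
    have hla : Real.log ‖a‖ + Real.log ‖x‖ = (a*x).re - 1 := by
      rw [← Real.log_mul hax0 hxx0, ← norm_mul, ha1, Real.log_exp]
    have hlb : Real.log ‖b‖ + Real.log ‖x‖ = (b*x).re - 1 := by
      rw [← Real.log_mul hbx0 hxx0, ← norm_mul, hb1, Real.log_exp]
    have hre : (w*x).re = c := by
      have h5 : (w*x).re = (a*x).re - (b*x).re := by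
        rw [hw, sub_mul, Complex.sub_re]
      rw [h5, hc]
      linarith
    have hwx : w*x = (c:ℂ) + (((w*x).im : ℝ):ℂ)*Complex.I := by
      apply Complex.ext
      · simp [hre]
      · simp
    have haxpq : a*x = p + (((w*x).im : ℝ):ℂ)*q := by
      have h6 : a*x*w = (p + (((w*x).im : ℝ):ℂ)*q)*w := by
        calc a*x*w = a*(w*x) := by ring
        _ = a*((c:ℂ) + (((w*x).im : ℝ):ℂ)*Complex.I) := by rw [← hwx]
        _ = (p + (((w*x).im : ℝ):ℂ)*q)*w := by
            rw [hp, hq]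
            field_simp
      exact mul_right_cancel₀ hw0 h6
    refine ⟨haxpq, ?_, ?_⟩
    · have h1 : A*((w*x).im)^2 + B*((w*x).im) + C = Complex.normSq (a*x) := by
        rw [haxpq, expand_normSq]
      have h2 := szego_normSq hax
      have h3 : (a*x).re = p.re + q.re * ((w*x).im) := by
        rw [haxpq, expand_re]
      rw [h1, h2, h3]
    · have h3 : (a*x).re = p.re + q.re * ((w*x).im) := by
        rw [haxpq, expand_re]
      rw [← h3]
      exact ha2
  apply subset_pair
  intro x hx y hy z hz
  by_contra hcon
  push_neg at hcon
  obtain ⟨hxy, hxz, hyz⟩ := hcon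
  have kx := key x hx
  have ky := key y hy
  have kz := key z hz
  have hinj : ∀ u v : ℂ, a*u = p + (((w*u).im : ℝ):ℂ)*q → a*v = p + (((w*v).im : ℝ):ℂ)*q →
      (w*u).im = (w*v).im → u = v := by
    intro u v hu hv huv
    have : a*u = a*v := by rw [hu, hv, huv]
    exact mul_left_cancel₀ ha this
  exact core_distinct A B C p.re q.re hA hQ ((w*x).im) ((w*y).im) ((w*z).im)
    kx.2 ky.2 kz.2
    (fun h => hxy (hinj x y kx.1 ky.1 h))
    (fun h => hxz (hinj x z kx.1 kz.1 h))
    (fun h => hyz (hinj y z ky.1 kz.1 h))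
end

section
/- Let w_0 be the unique positive real number satisfying w_0 e^{w_0} = e^{−1} (that is, w_0 = W(e^{−1}) where W is the principal branch of the Lambert W-function). Then: (i) for every z ∈ ℂ with |z| < w_0 one has |z e^{1−z}| < 1; (ii) if a' ∈ Z(g) with |a'| > r_0/w_0, then for every b ∈ Z(g) with |b| = r_0 the point b/a' lies in the connected component of 0 of the open set {z ∈ ℂ : |z e^{1−z}| < 1}, so a' is a non-dominant zero of g; in particular every dominant zero a of g satisfies |a| ≤ r_0/w_0, and g has only finitely many dominant zeros. -/
/-- `φ(z) = z e^{1−z}`. -/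
noncomputable def phiF (z : ℂ) : ℂ := z * Complex.exp (1 - z)

/-- The open interior of the Szegő curve: the connected component of `0` in
`{z : |φ(z)| < 1}`. -/
noncomputable def IntSzego : Set ℂ :=
  connectedComponentIn {z : ℂ | ‖phiF z‖ < 1} 0

/-- `a` is a dominant zero of `g` (with minimal zero modulus `r₀`) if `g a = 0` and
either `|a| = r₀` or `b/a ∉ Int(S)` for every zero `b` of `g` of modulus `r₀`. -/
def IsDominant (g : ℂ → ℂ) (r0 : ℝ) (a : ℂ) : Prop :=
  g a = 0 ∧ (‖a‖ = r0 ∨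
    ∀ b : ℂ, g b = 0 → ‖b‖ = r0 → b / a ∉ IntSzego)

/-- Let `w₀ > 0` satisfy `w₀ e^{w₀} = e^{−1}` (`w₀ = W(e^{−1})`).
Then (i) `|z| < w₀` implies `|z e^{1−z}| < 1`; (ii) any zero `a'` of `g` with
`|a'| > r₀/w₀` has `b/a' ∈ Int(S)` for every zero `b` of modulus `r₀`, hence is
non-dominant; in particular every dominant zero `a` satisfies `|a| ≤ r₀/w₀` and `g`
has only finitely many dominant zeros. -/
theorem stmt_13 (g : ℂ → ℂ) (hg : Differentiable ℂ g) (hg0 : g 0 ≠ 0)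
    (r0 : ℝ) (hr0pos : 0 < r0)
    (hr0 : IsLeast {r : ℝ | ∃ a : ℂ, g a = 0 ∧ ‖a‖ = r} r0)
    (w0 : ℝ) (hw0pos : 0 < w0) (hw0 : w0 * Real.exp w0 = Real.exp (-1)) :
    (∀ z : ℂ, ‖z‖ < w0 → ‖z * Complex.exp (1 - z)‖ < 1) ∧
    (∀ a' : ℂ, g a' = 0 → r0 / w0 < ‖a'‖ →
      (∀ b : ℂ, g b = 0 → ‖b‖ = r0 → b / a' ∈ IntSzego) ∧
      ¬ IsDominant g r0 a') ∧
    (∀ a : ℂ, IsDominant g r0 a → ‖a‖ ≤ r0 / w0) ∧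
    {a : ℂ | IsDominant g r0 a}.Finite := by
  -- w0 < 1
  have hw1 : w0 < 1 := by
    by_contra h
    push_neg at h
    have h1 : Real.exp (-1) < 1 := Real.exp_lt_one_iff.2 (by norm_num)
    have h2 : (1:ℝ) ≤ Real.exp w0 := Real.one_le_exp hw0pos.le
    nlinarith [Real.exp_pos w0]
  -- Part (i)
  have part1 : ∀ z : ℂ, ‖z‖ < w0 → ‖z * Complex.exp (1 - z)‖ < 1 := by
    intro z hz
    have habs : ‖z * Complex.exp (1 - z)‖
        = ‖z‖ * Real.exp (1 - z.re) := by
      rw [norm_mul, Complex.norm_exp]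
      norm_num
    rw [habs]
    have hre : -z.re ≤ ‖z‖ :=
      (neg_le_abs z.re).trans (Complex.abs_re_le_norm z)
    have h1 : Real.exp (1 - z.re) ≤ Real.exp (1 + w0) := by
      apply Real.exp_le_exp.2
      linarith
    have h2 : ‖z‖ * Real.exp (1 - z.re) ≤ ‖z‖ * Real.exp (1 + w0) :=
      mul_le_mul_of_nonneg_left h1 (norm_nonneg z)
    have h3 : ‖z‖ * Real.exp (1 + w0) < w0 * Real.exp (1 + w0) :=
      mul_lt_mul_of_pos_right hz (Real.exp_pos _)
    have h4 : w0 * Real.exp (1 + w0) = 1 := by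
      rw [Real.exp_add]
      have : w0 * (Real.exp 1 * Real.exp w0) = Real.exp 1 * (w0 * Real.exp w0) := by ring
      rw [this, hw0, ← Real.exp_add]
      norm_num
    linarith
  -- ball 0 w0 ⊆ IntSzego
  have hball : Metric.ball (0:ℂ) w0 ⊆ IntSzego := by
    have hsub : Metric.ball (0:ℂ) w0 ⊆ {z : ℂ | ‖phiF z‖ < 1} := by
      intro z hz
      simp only [Metric.mem_ball, Complex.dist_eq, sub_zero] at hz
      exact part1 z hz
    exact (convex_ball (0:ℂ) w0).isPreconnected.subset_connectedComponentIn
      (by simpa [Metric.mem_ball] using hw0pos) hsub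
  have hrw : 0 < r0 / w0 := div_pos hr0pos hw0pos
  -- Part (ii)
  have part2 : ∀ a' : ℂ, g a' = 0 → r0 / w0 < ‖a'‖ →
      (∀ b : ℂ, g b = 0 → ‖b‖ = r0 → b / a' ∈ IntSzego) ∧
      ¬ IsDominant g r0 a' := by
    intro a' ha' hgt
    have ha'pos : 0 < ‖a'‖ := lt_trans hrw hgt
    have hmem : ∀ b : ℂ, g b = 0 → ‖b‖ = r0 → b / a' ∈ IntSzego := by
      intro b hb hbr
      apply hball
      simp only [Metric.mem_ball, Complex.dist_eq, sub_zero, norm_div, hbr]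
      rw [div_lt_iff₀ ha'pos]
      calc r0 = (r0 / w0) * w0 := by field_simp
        _ < ‖a'‖ * w0 := by
            exact mul_lt_mul_of_pos_right hgt hw0pos
        _ = w0 * ‖a'‖ := mul_comm _ _
    refine ⟨hmem, ?_⟩
    rintro ⟨-, h | h⟩
    · have : r0 < r0 / w0 := by
        rw [lt_div_iff₀ hw0pos]
        nlinarith
      linarith [h ▸ hgt, hgt]
    · obtain ⟨b, hb, hbr⟩ := hr0.1
      exact h b hb hbr (hmem b hb hbr)
  -- Part (iii)
  have part3 : ∀ a : ℂ, IsDominant g r0 a → ‖a‖ ≤ r0 / w0 := by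
    intro a ha
    by_contra h
    push_neg at h
    exact (part2 a ha.1 h).2 ha
  refine ⟨part1, part2, part3, ?_⟩
  -- finiteness
  by_contra hinf
  have hinf' : {a : ℂ | IsDominant g r0 a}.Infinite := hinf
  obtain ⟨x, -, hx⟩ := hinf'.exists_accPt_of_subset_isCompact
    (isCompact_closedBall (0:ℂ) (r0 / w0))
    (fun a ha => by
      simpa [Metric.mem_closedBall, Complex.dist_eq] using part3 a ha)
  have hfreq : ∃ᶠ z in nhdsWithin x {x}ᶜ, g z = 0 := by
    rw [frequently_nhdsWithin_iff]
    exact (accPt_iff_frequently.1 hx).mono fun y hy => ⟨hy.2.1, hy.1⟩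
  have hzero : Set.EqOn g 0 Set.univ := by
    apply (Complex.analyticOnNhd_univ_iff_differentiable.2 hg).eqOn_zero_of_preconnected_of_frequently_eq_zero
      isPreconnected_univ (Set.mem_univ x) hfreq
  exact hg0 (hzero (Set.mem_univ 0))
end

section
/- Let a' ∈ ℂ with a' ≠ 0, let β ≥ 1 be an integer, let b_1, …, b_β ∈ ℂ, and let ρ > 0 satisfy |a'| ≤ ρ and 1/|a'| ≤ ρ. Let δ > 0 satisfy 2δρ ≤ 1/2. For each integer n ≥ 1 and x ∈ ℂ set σ_n(x) = Σ_{m=1}^{β} (b_m/(m−1)!) · (∂/∂w)^{m−1} [ w^{−n} S_{n−1}(n w x) ] evaluated at w = a'. Then there exists K > 0, independent of n and x, such that for all n ≥ 1 and all x ∈ ℂ with |x − 1/a'| ≤ δ, |σ_n(x)| ≤ K · |e x|^n · e^{6 n δ ρ}. -/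
set_option maxHeartbeats 1000000

lemma eqOn_iter_deriv {f g : ℂ → ℂ} {U : Set ℂ} (hU : IsOpen U) (h : Set.EqOn f g U) (k : ℕ) :
    Set.EqOn (deriv^[k] f) (deriv^[k] g) U := by
  induction k with
  | zero => exact h
  | succ k ih =>
    intro w hw
    rw [Function.iterate_succ_apply', Function.iterate_succ_apply']
    exact Filter.EventuallyEq.deriv_eq (Filter.eventuallyEq_of_mem (hU.mem_nhds hw) ih)

lemma iter_deriv_sum_zpow {ι : Type*} (s : Finset ι) (c : ι → ℂ) (e : ι → ℤ) (k : ℕ) :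
    Set.EqOn (deriv^[k] (fun z : ℂ => ∑ i ∈ s, c i * z ^ e i))
      (fun z : ℂ => ∑ i ∈ s, c i * ((∏ j ∈ Finset.range k, ((e i : ℂ) - j)) * z ^ (e i - k)))
      {(0 : ℂ)}ᶜ := by
  induction k with
  | zero => intro w hw; simp
  | succ k ih =>
    intro w hw
    have hw0 : w ≠ 0 := hw
    rw [Function.iterate_succ_apply']
    have h1 : deriv^[k] (fun z : ℂ => ∑ i ∈ s, c i * z ^ e i) =ᶠ[nhds w]
        (fun z : ℂ => ∑ i ∈ s, c i * ((∏ j ∈ Finset.range k, ((e i : ℂ) - j)) * z ^ (e i - k))) :=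
      Filter.eventuallyEq_of_mem (isOpen_compl_singleton.mem_nhds hw) ih
    rw [h1.deriv_eq]
    rw [deriv_fun_sum (fun i _ => ((differentiableAt_zpow.mpr (Or.inl hw0)).const_mul _).const_mul _)]
    refine Finset.sum_congr rfl fun i _ => ?_
    rw [deriv_const_mul _ ((differentiableAt_zpow.mpr (Or.inl hw0)).const_mul _),
        deriv_const_mul _ (differentiableAt_zpow.mpr (Or.inl hw0)), deriv_zpow,
        Finset.prod_range_succ]
    have he : e i - ((k : ℕ) + 1 : ℕ) = e i - k - 1 := by push_cast; ring
    rw [he]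
    push_cast
    ring

/-- Let `a' ≠ 0`, `β ≥ 1`, `b₁, …, b_β ∈ ℂ`, `ρ > 0` with
`|a'| ≤ ρ` and `1/|a'| ≤ ρ`, and `δ > 0` with `2δρ ≤ 1/2`. Set
`σₙ(x) = ∑_{m=1}^{β} (b_m/(m−1)!) ∂_w^{m−1}[w^{−n} S_{n−1}(nwx)]|_{w=a'}`. Then
there is `K > 0` with `|σₙ(x)| ≤ K |ex|^n e^{6nδρ}` for all `n ≥ 1` and all `x`
with `|x − 1/a'| ≤ δ`. -/
theorem stmt_15 (a' : ℂ) (ha' : a' ≠ 0) (β : ℕ) (hβ : 1 ≤ β) (b : ℕ → ℂ)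
    (ρ : ℝ) (hρ1 : ‖a'‖ ≤ ρ) (hρ2 : 1 / ‖a'‖ ≤ ρ)
    (δ : ℝ) (hδ : 0 < δ) (hδρ : 2 * δ * ρ ≤ 1 / 2) :
    ∃ K > 0, ∀ n : ℕ, 1 ≤ n → ∀ x : ℂ, ‖x - 1 / a'‖ ≤ δ →
      ‖∑ m ∈ Finset.Icc 1 β, (b m / (Nat.factorial (m - 1) : ℂ)) *
          iteratedDeriv (m - 1)
            (fun w : ℂ => w ^ (-(n : ℤ)) *
              ∑ k ∈ Finset.range n, ((n : ℂ) * w * x) ^ k / (Nat.factorial k : ℂ))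
            a'‖ ≤
      K * ‖Complex.exp 1 * x‖ ^ n * Real.exp (6 * n * δ * ρ) := by
  set A := ‖a'‖ with hAdef
  have hA : 0 < A := norm_pos_iff.mpr ha'
  have hρ0 : 0 < ρ := lt_of_lt_of_le hA hρ1
  have hAρ : 1 ≤ A * ρ := by
    have h1 : (1 / A) * A = 1 := by field_simp
    nlinarith [mul_le_mul_of_nonneg_right hρ2 hA.le]
  have hρge1 : 1 ≤ ρ := by nlinarith
  have hδρ4 : δ * ρ ≤ 1 / 4 := by nlinarith
  have hδA : δ * A ≤ δ * ρ := by nlinarith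
  set C₁ := ∑ m ∈ Finset.Icc 1 β, ‖b m‖ / A ^ (m - 1) with hC₁def
  have hC₁0 : 0 ≤ C₁ := Finset.sum_nonneg fun m _ => by positivity
  set C₂ := (1 + (β : ℝ)) ^ β * (Nat.factorial β : ℝ) / (3 * δ * ρ) ^ β with hC₂def
  have hC₂0 : 0 < C₂ := by positivity
  refine ⟨C₁ * C₂ + 1, by positivity, fun n hn x hx => ?_⟩
  set t := ‖x‖ with htdef
  have hn1 : (1 : ℝ) ≤ (n : ℝ) := by exact_mod_cast hn
  have hnβ1 : (1 : ℝ) ≤ (n : ℝ) + β := by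
    have : (0 : ℝ) ≤ (β : ℝ) := Nat.cast_nonneg β
    linarith
  -- bounds on t
  have hxlow : 1 / A - δ ≤ t := by
    have h1 : (1 / a' : ℂ) = x - (x - 1 / a') := by ring
    have h2 : ‖1 / a'‖ ≤ t + δ := by
      rw [h1]
      calc ‖x - (x - 1 / a')‖ ≤ ‖x‖ + ‖x - 1 / a'‖ := by
            simpa using norm_sub_le x (x - 1 / a')
        _ ≤ t + δ := by exact add_le_add le_rfl hx
    have h3 : ‖1 / a'‖ = 1 / A := by rw [norm_div, norm_one]
    linarith [h3 ▸ h2]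
  have hxup : t ≤ 1 / A + δ := by
    have h1 : x = (x - 1 / a') + 1 / a' := by ring
    have h3 : ‖1 / a'‖ = 1 / A := by rw [norm_div, norm_one]
    calc t = ‖(x - 1 / a') + 1 / a'‖ := by rw [← h1]
      _ ≤ ‖x - 1 / a'‖ + ‖1 / a'‖ := by
            simpa using norm_add_le (x - 1 / a') (1 / a')
      _ ≤ δ + 1 / A := by rw [h3]; exact add_le_add hx le_rfl
      _ = 1 / A + δ := by ring
  have h1A : (1 / A) * A = 1 := by field_simp
  have htAl : 1 - δ * ρ ≤ t * A := by nlinarith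
  have htAu : t * A ≤ 1 + δ * ρ := by nlinarith
  have ht0 : 0 < t := by nlinarith
  -- rewrite the iterated derivative
  set c : ℕ → ℂ := fun k => (n : ℂ) ^ k * x ^ k / (Nat.factorial k : ℂ) with hcdef
  set e : ℕ → ℤ := fun k => (k : ℤ) - n with hedef
  have hEq : Set.EqOn
      (fun w : ℂ => w ^ (-(n : ℤ)) *
        ∑ k ∈ Finset.range n, ((n : ℂ) * w * x) ^ k / (Nat.factorial k : ℂ))
      (fun z : ℂ => ∑ k ∈ Finset.range n, c k * z ^ e k) {(0 : ℂ)}ᶜ := by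
    intro w hw
    have hw0 : w ≠ 0 := hw
    simp only [Finset.mul_sum]
    refine Finset.sum_congr rfl fun k hk => ?_
    have hz : (w : ℂ) ^ ((k : ℤ) - n) = w ^ (k : ℕ) * w ^ (-(n : ℤ)) := by
      rw [sub_eq_add_neg, zpow_add₀ hw0, zpow_natCast]
    simp only [hcdef, hedef]
    rw [hz, mul_pow, mul_pow]
    ring
  have ha'mem : a' ∈ ({(0 : ℂ)}ᶜ : Set ℂ) := ha'
  have hiter : ∀ m : ℕ,
      iteratedDeriv (m - 1)
        (fun w : ℂ => w ^ (-(n : ℤ)) *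
          ∑ k ∈ Finset.range n, ((n : ℂ) * w * x) ^ k / (Nat.factorial k : ℂ)) a'
      = ∑ k ∈ Finset.range n, c k *
          ((∏ j ∈ Finset.range (m - 1), ((e k : ℂ) - j)) * a' ^ (e k - ((m - 1 : ℕ) : ℤ))) := by
    intro m
    rw [iteratedDeriv_eq_iterate]
    rw [eqOn_iter_deriv isOpen_compl_singleton hEq (m - 1) ha'mem]
    exact iter_deriv_sum_zpow (Finset.range n) c e (m - 1) ha'mem
  -- per-m estimate
  have hmain : ∀ m ∈ Finset.Icc 1 β,
      ‖b m / (Nat.factorial (m - 1) : ℂ) *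
        iteratedDeriv (m - 1)
          (fun w : ℂ => w ^ (-(n : ℤ)) *
            ∑ k ∈ Finset.range n, ((n : ℂ) * w * x) ^ k / (Nat.factorial k : ℂ)) a'‖
      ≤ (‖b m‖ / A ^ (m - 1)) *
          (((n : ℝ) + β) ^ (β - 1) / A ^ n * Real.exp ((n : ℝ) * (t * A))) := by
    intro m hm
    obtain ⟨hm1, hm2⟩ := Finset.mem_Icc.mp hm
    rw [norm_mul, hiter m]
    have hb : ‖b m / (Nat.factorial (m - 1) : ℂ)‖ ≤ ‖b m‖ := by
      rw [norm_div]
      have h1 : (1 : ℝ) ≤ ‖(Nat.factorial (m - 1) : ℂ)‖ := by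
        rw [Complex.norm_natCast]
        exact_mod_cast Nat.one_le_iff_ne_zero.mpr (Nat.factorial_ne_zero _)
      calc ‖b m‖ / ‖(Nat.factorial (m - 1) : ℂ)‖
          ≤ ‖b m‖ / 1 := by
            apply div_le_div_of_nonneg_left (norm_nonneg _) one_pos h1
        _ = ‖b m‖ := div_one _
    have hsum : ‖∑ k ∈ Finset.range n, c k *
          ((∏ j ∈ Finset.range (m - 1), ((e k : ℂ) - j)) * a' ^ (e k - ((m - 1 : ℕ) : ℤ)))‖
        ≤ ((n : ℝ) + β) ^ (β - 1) / A ^ n / A ^ (m - 1) * Real.exp ((n : ℝ) * (t * A)) := by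
      calc ‖∑ k ∈ Finset.range n, c k *
            ((∏ j ∈ Finset.range (m - 1), ((e k : ℂ) - j)) * a' ^ (e k - ((m - 1 : ℕ) : ℤ)))‖
          ≤ ∑ k ∈ Finset.range n, ‖c k *
            ((∏ j ∈ Finset.range (m - 1), ((e k : ℂ) - j)) * a' ^ (e k - ((m - 1 : ℕ) : ℤ)))‖ :=
            norm_sum_le _ _
        _ ≤ ∑ k ∈ Finset.range n, ((n : ℝ) * (t * A)) ^ k / (Nat.factorial k : ℝ) *
              (((n : ℝ) + β) ^ (β - 1) / A ^ n / A ^ (m - 1)) := by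
            refine Finset.sum_le_sum fun k hk => ?_
            have hkn : k < n := Finset.mem_range.mp hk
            rw [norm_mul, norm_mul, norm_zpow]
            have hck : ‖c k‖ = (n : ℝ) ^ k * t ^ k / (Nat.factorial k : ℝ) := by
              simp only [hcdef, norm_div, norm_mul, norm_pow, Complex.norm_natCast, htdef]
            have hprod : ‖∏ j ∈ Finset.range (m - 1), ((e k : ℂ) - j)‖
                ≤ ((n : ℝ) + β) ^ (β - 1) := by
              rw [norm_prod]
              calc ∏ j ∈ Finset.range (m - 1), ‖(e k : ℂ) - j‖
                  ≤ ∏ j ∈ Finset.range (m - 1), ((n : ℝ) + β) := by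
                    refine Finset.prod_le_prod (fun _ _ => norm_nonneg _)
                      (fun j hj => ?_)
                    have hj' : j < m - 1 := Finset.mem_range.mp hj
                    have hfac : ((e k : ℂ) - j) = (((e k - j : ℤ) : ℂ)) := by push_cast; ring
                    rw [hfac, Complex.norm_intCast]
                    have hint : |(e k - j : ℤ)| ≤ (n : ℤ) + β := by
                      simp only [hedef]
                      rw [abs_le]
                      constructor <;> omega
                    calc |((e k - j : ℤ) : ℝ)| = ((|e k - j| : ℤ) : ℝ) := by
                          rw [Int.cast_abs]
                      _ ≤ (((n : ℤ) + β : ℤ) : ℝ) := by exact_mod_cast hint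
                      _ = (n : ℝ) + β := by push_cast; ring
                  _ = ((n : ℝ) + β) ^ (m - 1) := by rw [Finset.prod_const, Finset.card_range]
                  _ ≤ ((n : ℝ) + β) ^ (β - 1) := by
                    apply pow_le_pow_right₀ hnβ1 (by omega)
            have hzpow : A ^ (e k - ((m - 1 : ℕ) : ℤ)) = A ^ k / A ^ n / A ^ (m - 1) := by
              simp only [hedef]
              rw [zpow_sub₀ hA.ne', zpow_sub₀ hA.ne', zpow_natCast, zpow_natCast, zpow_natCast]
            rw [hck, hzpow]
            have hApos : (0 : ℝ) < A ^ k / A ^ n / A ^ (m - 1) := by positivity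
            calc (n : ℝ) ^ k * t ^ k / (Nat.factorial k : ℝ) *
                  (‖∏ j ∈ Finset.range (m - 1), ((e k : ℂ) - j)‖ *
                    (A ^ k / A ^ n / A ^ (m - 1)))
                ≤ (n : ℝ) ^ k * t ^ k / (Nat.factorial k : ℝ) *
                  (((n : ℝ) + β) ^ (β - 1) * (A ^ k / A ^ n / A ^ (m - 1))) := by
                  apply mul_le_mul_of_nonneg_left _ (by positivity)
                  exact mul_le_mul_of_nonneg_right hprod hApos.le
              _ = ((n : ℝ) * (t * A)) ^ k / (Nat.factorial k : ℝ) *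
                  (((n : ℝ) + β) ^ (β - 1) / A ^ n / A ^ (m - 1)) := by
                  rw [mul_pow, mul_pow]
                  ring
        _ = (((n : ℝ) + β) ^ (β - 1) / A ^ n / A ^ (m - 1)) *
              ∑ k ∈ Finset.range n, ((n : ℝ) * (t * A)) ^ k / (Nat.factorial k : ℝ) := by
            rw [Finset.mul_sum]; exact Finset.sum_congr rfl fun k _ => by ring
        _ ≤ (((n : ℝ) + β) ^ (β - 1) / A ^ n / A ^ (m - 1)) * Real.exp ((n : ℝ) * (t * A)) := by
            apply mul_le_mul_of_nonneg_left _ (by positivity)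
            exact Real.sum_le_exp_of_nonneg (by positivity) n
        _ = ((n : ℝ) + β) ^ (β - 1) / A ^ n / A ^ (m - 1) * Real.exp ((n : ℝ) * (t * A)) := rfl
    calc ‖b m / (Nat.factorial (m - 1) : ℂ)‖ * ‖∑ k ∈ Finset.range n,
          c k * ((∏ j ∈ Finset.range (m - 1), ((e k : ℂ) - j)) * a' ^ (e k - ((m - 1 : ℕ) : ℤ)))‖
        ≤ ‖b m‖ *
            (((n : ℝ) + β) ^ (β - 1) / A ^ n / A ^ (m - 1) * Real.exp ((n : ℝ) * (t * A))) :=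
          mul_le_mul hb hsum (norm_nonneg _) (norm_nonneg _)
      _ = (‖b m‖ / A ^ (m - 1)) *
            (((n : ℝ) + β) ^ (β - 1) / A ^ n * Real.exp ((n : ℝ) * (t * A))) := by
          ring
  -- numeric bounds
  have hB1 : ((n : ℝ) + β) ^ (β - 1) ≤ C₂ * Real.exp (3 * (n : ℝ) * (δ * ρ)) := by
    have hfacpos : (0 : ℝ) < (Nat.factorial β : ℝ) := by positivity
    have hfac : (3 * (n : ℝ) * (δ * ρ)) ^ β / (Nat.factorial β : ℝ)
        ≤ Real.exp (3 * (n : ℝ) * (δ * ρ)) := by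
      calc (3 * (n : ℝ) * (δ * ρ)) ^ β / (Nat.factorial β : ℝ)
          ≤ ∑ i ∈ Finset.range (β + 1), (3 * (n : ℝ) * (δ * ρ)) ^ i / (Nat.factorial i : ℝ) :=
            Finset.single_le_sum (f := fun i => (3 * (n : ℝ) * (δ * ρ)) ^ i / (Nat.factorial i : ℝ))
              (fun i _ => by positivity) (Finset.self_mem_range_succ β)
        _ ≤ Real.exp (3 * (n : ℝ) * (δ * ρ)) := Real.sum_le_exp_of_nonneg (by positivity) _
    have h3 : (0 : ℝ) < (3 * δ * ρ) ^ β := by positivity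
    have hn_pow : (n : ℝ) ^ β ≤ (Nat.factorial β : ℝ) / (3 * δ * ρ) ^ β *
        Real.exp (3 * (n : ℝ) * (δ * ρ)) := by
      rw [div_mul_eq_mul_div, le_div_iff₀ h3]
      have heq : (n : ℝ) ^ β * (3 * δ * ρ) ^ β = (3 * (n : ℝ) * (δ * ρ)) ^ β := by
        rw [← mul_pow]; congr 1; ring
      rw [heq]
      rw [div_le_iff₀ hfacpos] at hfac
      linarith
    calc ((n : ℝ) + β) ^ (β - 1) ≤ ((1 + (β : ℝ)) * n) ^ (β - 1) := by
          apply pow_le_pow_left₀ (by positivity)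
          nlinarith [Nat.cast_nonneg (α := ℝ) β]
      _ ≤ ((1 + (β : ℝ)) * n) ^ β := by
          apply pow_le_pow_right₀ (by nlinarith [Nat.cast_nonneg (α := ℝ) β]) (Nat.sub_le β 1)
      _ = (1 + (β : ℝ)) ^ β * (n : ℝ) ^ β := mul_pow _ _ _
      _ ≤ (1 + (β : ℝ)) ^ β * ((Nat.factorial β : ℝ) / (3 * δ * ρ) ^ β *
            Real.exp (3 * (n : ℝ) * (δ * ρ))) := by
          apply mul_le_mul_of_nonneg_left hn_pow (by positivity)
      _ = C₂ * Real.exp (3 * (n : ℝ) * (δ * ρ)) := by rw [hC₂def]; ring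
  have hB2 : (1 : ℝ) / A ^ n ≤ t ^ n * Real.exp (2 * (n : ℝ) * (δ * ρ)) := by
    have hexp : 1 ≤ (1 - δ * ρ) * Real.exp (2 * (δ * ρ)) := by
      nlinarith [Real.add_one_le_exp (2 * (δ * ρ)), mul_pos hδ hρ0]
    have h1 : 1 / A ≤ t * Real.exp (2 * (δ * ρ)) := by
      rw [div_le_iff₀ hA]
      nlinarith [mul_le_mul_of_nonneg_right htAl (Real.exp_pos (2 * (δ * ρ))).le]
    calc (1 : ℝ) / A ^ n = (1 / A) ^ n := by rw [div_pow, one_pow]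
      _ ≤ (t * Real.exp (2 * (δ * ρ))) ^ n := pow_le_pow_left₀ (by positivity) h1 n
      _ = t ^ n * Real.exp (2 * (n : ℝ) * (δ * ρ)) := by
          rw [mul_pow, ← Real.exp_nat_mul]; congr 1; ring
  have hB3 : Real.exp ((n : ℝ) * (t * A)) ≤ Real.exp 1 ^ n * Real.exp ((n : ℝ) * (δ * ρ)) := by
    have h : (n : ℝ) * (t * A) ≤ (n : ℝ) * 1 + (n : ℝ) * (δ * ρ) := by nlinarith
    calc Real.exp ((n : ℝ) * (t * A)) ≤ Real.exp ((n : ℝ) * 1 + (n : ℝ) * (δ * ρ)) :=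
          Real.exp_le_exp.mpr h
      _ = Real.exp 1 ^ n * Real.exp ((n : ℝ) * (δ * ρ)) := by
          rw [Real.exp_add, Real.exp_nat_mul]
  -- assemble
  have habs : ‖Complex.exp 1 * x‖ = Real.exp 1 * t := by
    rw [norm_mul, Complex.norm_exp]
    norm_num [htdef]
  rw [habs]
  calc ‖∑ m ∈ Finset.Icc 1 β, b m / (Nat.factorial (m - 1) : ℂ) *
          iteratedDeriv (m - 1)
            (fun w : ℂ => w ^ (-(n : ℤ)) *
              ∑ k ∈ Finset.range n, ((n : ℂ) * w * x) ^ k / (Nat.factorial k : ℂ)) a'‖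
      ≤ ∑ m ∈ Finset.Icc 1 β, ‖b m / (Nat.factorial (m - 1) : ℂ) *
          iteratedDeriv (m - 1)
            (fun w : ℂ => w ^ (-(n : ℤ)) *
              ∑ k ∈ Finset.range n, ((n : ℂ) * w * x) ^ k / (Nat.factorial k : ℂ)) a'‖ :=
        norm_sum_le _ _
    _ ≤ ∑ m ∈ Finset.Icc 1 β, (‖b m‖ / A ^ (m - 1)) *
          (((n : ℝ) + β) ^ (β - 1) / A ^ n * Real.exp ((n : ℝ) * (t * A))) :=
        Finset.sum_le_sum hmain
    _ = C₁ * (((n : ℝ) + β) ^ (β - 1) / A ^ n * Real.exp ((n : ℝ) * (t * A))) := by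
        rw [hC₁def, Finset.sum_mul]
    _ = C₁ * (((n : ℝ) + β) ^ (β - 1) * ((1 : ℝ) / A ^ n) * Real.exp ((n : ℝ) * (t * A))) := by
        ring
    _ ≤ C₁ * ((C₂ * Real.exp (3 * (n : ℝ) * (δ * ρ))) *
          (t ^ n * Real.exp (2 * (n : ℝ) * (δ * ρ))) *
          (Real.exp 1 ^ n * Real.exp ((n : ℝ) * (δ * ρ)))) := by
        apply mul_le_mul_of_nonneg_left _ hC₁0
        apply mul_le_mul (mul_le_mul hB1 hB2 (by positivity) (by positivity)) hB3
          (by positivity) (by positivity)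
    _ = (C₁ * C₂) * (Real.exp 1 * t) ^ n *
          (Real.exp (3 * (n : ℝ) * (δ * ρ)) * Real.exp (2 * (n : ℝ) * (δ * ρ)) *
            Real.exp ((n : ℝ) * (δ * ρ))) := by
        rw [mul_pow]; ring
    _ = (C₁ * C₂) * (Real.exp 1 * t) ^ n * Real.exp (6 * (n : ℝ) * δ * ρ) := by
        rw [← Real.exp_add, ← Real.exp_add]; congr 1; ring
    _ ≤ (C₁ * C₂ + 1) * (Real.exp 1 * t) ^ n * Real.exp (6 * (n : ℝ) * δ * ρ) := by
        have h1 : (0 : ℝ) ≤ (Real.exp 1 * t) ^ n * Real.exp (6 * (n : ℝ) * δ * ρ) := by positivity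
        nlinarith
end

section
/- Let L be a closed line segment in ℂ with distinct endpoints z_1 and z_2, and let f be analytic on an open set containing L with f(z) ≠ 0 for every z ∈ L. Suppose the set {z ∈ L : Re f(z) = 0} is finite with cardinality ℓ. Then | Im ∫_{L} f′(z)/f(z) dz | ≤ (ℓ + 1) π, where the integral is taken along the segment from z_1 to z_2. -/
/-- Backlund-type estimate: let `L` be the closed segment from `z₁`
to `z₂` (`z₁ ≠ z₂`), `f` analytic and nonvanishing on an open set containing `L`,
and suppose `{z ∈ L : Re f(z) = 0}` is finite with `ℓ` elements. Then
`|Im ∫_L f′(z)/f(z) dz| ≤ (ℓ + 1)π`, the integral being taken along the segment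
from `z₁` to `z₂`. -/
theorem stmt_18 (z1 z2 : ℂ) (hz : z1 ≠ z2) (f : ℂ → ℂ) (U : Set ℂ)
    (hU : IsOpen U) (hLU : segment ℝ z1 z2 ⊆ U)
    (hf : DifferentiableOn ℂ f U)
    (hne : ∀ z ∈ segment ℝ z1 z2, f z ≠ 0)
    (ℓ : ℕ) (hfin : {z ∈ segment ℝ z1 z2 | (f z).re = 0}.Finite)
    (hcard : {z ∈ segment ℝ z1 z2 | (f z).re = 0}.ncard = ℓ) :
    |(∫ t in (0:ℝ)..1,
        deriv f (z1 + (t : ℂ) * (z2 - z1)) / f (z1 + (t : ℂ) * (z2 - z1)) *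
          (z2 - z1)).im| ≤ (ℓ + 1) * Real.pi := by
  by_contra hcon
  push_neg at hcon
  set c : ℂ := z2 - z1 with hcdef
  have hc0 : c ≠ 0 := sub_ne_zero.mpr hz.symm
  set γ : ℝ → ℂ := fun t => z1 + (t : ℂ) * c with hγdef
  have hγmem : ∀ t ∈ Set.Icc (0:ℝ) 1, γ t ∈ segment ℝ z1 z2 := by
    intro t ht
    rw [segment_eq_image']
    exact ⟨t, ht, by simp [γ, c, Complex.real_smul]⟩
  have hγcont : Continuous γ := by fun_prop
  -- the open set where f lives and is nonvanishing
  have hU'open : IsOpen {z | z ∈ U ∧ f z ≠ 0} := by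
    rw [isOpen_iff_mem_nhds]
    rintro z ⟨hzU, hz0⟩
    have hfc : ContinuousAt f z := (hf.differentiableAt (hU.mem_nhds hzU)).continuousAt
    filter_upwards [hU.mem_nhds hzU, hfc.eventually_ne hz0] with w h1 h2
    exact ⟨h1, h2⟩
  set V : Set ℝ := γ ⁻¹' {z | z ∈ U ∧ f z ≠ 0} with hVdef
  have hVopen : IsOpen V := hU'open.preimage hγcont
  have hIccV : Set.Icc (0:ℝ) 1 ⊆ V := fun t ht =>
    ⟨hLU (hγmem t ht), hne _ (hγmem t ht)⟩
  -- the logarithmic derivative integrand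
  set q : ℝ → ℂ := fun t => deriv f (γ t) / f (γ t) * c with hqdef
  have hanal : AnalyticOnNhd ℂ f U := hf.analyticOnNhd hU
  have hderivcont : ContinuousOn (deriv f) U := (hanal.deriv).continuousOn
  have hqcont : ContinuousOn q V := by
    apply ContinuousOn.mul _ continuousOn_const
    exact ContinuousOn.div
      (hderivcont.comp hγcont.continuousOn (fun t ht => ht.1))
      (hf.continuousOn.comp hγcont.continuousOn (fun t ht => ht.1))
      (fun t ht => ht.2)
  set h : ℝ → ℂ := fun t => ∫ s in (0:ℝ)..t, q s with hhdef
  have hderiv : ∀ t ∈ Set.Icc (0:ℝ) 1, HasDerivAt h (q t) t := by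
    intro t ht
    have hsub : Set.uIcc (0:ℝ) t ⊆ V := by
      rw [Set.uIcc_of_le ht.1]
      exact fun s hs => hIccV ⟨hs.1, hs.2.trans ht.2⟩
    have h1 : IntervalIntegrable q MeasureTheory.volume 0 t :=
      (hqcont.mono hsub).intervalIntegrable
    exact intervalIntegral.integral_hasDerivAt_right h1
      (hqcont.stronglyMeasurableAtFilter hVopen t (hIccV ht))
      (hqcont.continuousAt (hVopen.mem_nhds (hIccV ht)))
  have hh0 : h 0 = 0 := intervalIntegral.integral_same
  -- f ∘ γ = f z1 * exp (h t)
  have hkey : ∀ t ∈ Set.Icc (0:ℝ) 1, f (γ t) = f z1 * Complex.exp (h t) := by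
    have hF : ∀ s ∈ Set.Icc (0:ℝ) 1,
        HasDerivAt (fun u => f (γ u) * Complex.exp (-h u)) 0 s := by
      intro s hs
      have hγd : HasDerivAt γ c s := by
        have := ((hasDerivAt_id s).smul_const c).const_add z1
        simpa [γ, Complex.real_smul] using this
      have hsV := hIccV hs
      have hfa : DifferentiableAt ℂ f (γ s) := hf.differentiableAt (hU.mem_nhds hsV.1)
      have hF' : HasFDerivAt f
          ((ContinuousLinearMap.smulRight (1 : ℂ →L[ℂ] ℂ) (deriv f (γ s))).restrictScalars ℝ)
          (γ s) := (hfa.hasDerivAt.hasFDerivAt).restrictScalars ℝ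
      have hfd : HasDerivAt (fun u => f (γ u)) (c * deriv f (γ s)) s := by
        have := hF'.comp_hasDerivAt s hγd
        simpa [Function.comp_def, smul_eq_mul] using this
      have hed : HasDerivAt (fun u => Complex.exp (-h u))
          (Complex.exp (-h s) * (-q s)) s := ((hderiv s hs).neg).cexp
      have hder := hfd.mul hed
      have hne' : f (γ s) ≠ 0 := hsV.2
      have hq' : f (γ s) * q s = deriv f (γ s) * c := by
        have e0 : f (γ s) * q s = deriv f (γ s) / f (γ s) * f (γ s) * c := by
          simp only [q]; ring
        rw [e0, div_mul_cancel₀ _ hne']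
      have h0 : c * deriv f (γ s) * Complex.exp (-h s)
          + f (γ s) * (Complex.exp (-h s) * -q s) = 0 := by
        have e1 : c * deriv f (γ s) * Complex.exp (-h s)
            + f (γ s) * (Complex.exp (-h s) * -q s)
            = Complex.exp (-h s) * (deriv f (γ s) * c - f (γ s) * q s) := by ring
        rw [e1, hq', sub_self, mul_zero]
      rw [h0] at hder
      exact hder
    have hconst := constant_of_has_deriv_right_zero
      (f := fun u => f (γ u) * Complex.exp (-h u)) (a := 0) (b := 1)
      (fun s hs => ((hF s hs).continuousAt).continuousWithinAt)
      (fun s hs => ((hF s ⟨hs.1, hs.2.le⟩).hasDerivWithinAt))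
    intro t ht
    have := hconst t ht
    simp only [hh0, neg_zero, Complex.exp_zero, mul_one] at this
    have hγ0 : γ 0 = z1 := by simp [γ]
    rw [hγ0] at this
    calc f (γ t) = f (γ t) * (Complex.exp (-h t) * Complex.exp (h t)) := by
          rw [← Complex.exp_add]; simp
      _ = f z1 * Complex.exp (h t) := by rw [← mul_assoc, this]
  -- the continuous argument
  set φ : ℝ → ℝ := fun t => Complex.arg (f z1) + (h t).im with hφdef
  have hre : ∀ t ∈ Set.Icc (0:ℝ) 1,
      (f (γ t)).re = ‖f z1‖ * Real.exp ((h t).re) * Real.cos (φ t) := by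
    intro t ht
    rw [hkey t ht]
    nth_rewrite 1 [← Complex.norm_mul_exp_arg_mul_I (f z1)]
    rw [mul_assoc, ← Complex.exp_add, Complex.re_ofReal_mul, Complex.exp_re]
    simp [φ, Complex.add_re, Complex.add_im, Complex.mul_re, Complex.mul_im,
      Complex.I_re, Complex.I_im]
    ring
  have hφcont : ContinuousOn φ (Set.Icc (0:ℝ) 1) := by
    apply continuousOn_const.add
    exact Complex.continuous_im.comp_continuousOn
      (fun t ht => ((hderiv t ht).continuousAt).continuousWithinAt)
  have hφ0 : φ 0 = Complex.arg (f z1) := by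
    show Complex.arg (f z1) + (h 0).im = _
    rw [hh0, Complex.zero_im, add_zero]
  have hφ1 : φ 1 - φ 0 = (h 1).im := by
    rw [hφ0]
    show Complex.arg (f z1) + (h 1).im - _ = _
    ring
  have hcon' : (ℓ + 1 : ℝ) * Real.pi < |(h 1).im| := hcon
  have hπ := Real.pi_pos
  set m := min (φ 0) (φ 1) with hmdef
  set M := max (φ 0) (φ 1) with hMdef
  have hMm : (ℓ + 1 : ℝ) * Real.pi < M - m := by
    have h1 : M - m = |φ 1 - φ 0| := max_sub_min_eq_abs _ _
    rw [h1, hφ1]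
    exact hcon'
  set x : ℝ := (m - Real.pi/2)/Real.pi with hxdef
  set j0 : ℤ := ⌊x⌋ + 1 with hj0def
  have hxm : x * Real.pi = m - Real.pi/2 := by
    rw [hxdef, div_mul_cancel₀ _ hπ.ne']
  have hgrid : ∀ k : ℕ, k ≤ ℓ →
      m < Real.pi/2 + ((j0 : ℝ) + k) * Real.pi ∧
      Real.pi/2 + ((j0 : ℝ) + k) * Real.pi < M := by
    intro k hk
    have hj1 : x < (j0 : ℝ) := by
      rw [hj0def]; push_cast; exact Int.lt_floor_add_one x
    have hj2 : (j0 : ℝ) ≤ x + 1 := by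
      rw [hj0def]; push_cast
      have := Int.floor_le x
      linarith
    have hk' : (k : ℝ) ≤ ℓ := by exact_mod_cast hk
    constructor
    · nlinarith [mul_lt_mul_of_pos_right hj1 hπ, mul_nonneg (Nat.cast_nonneg (α := ℝ) k) hπ.le]
    · nlinarith [mul_le_mul_of_nonneg_right hj2 hπ.le,
        mul_le_mul_of_nonneg_right hk' hπ.le]
  have hval : ∀ k : ℕ, k ≤ ℓ →
      ∃ t ∈ Set.Icc (0:ℝ) 1, φ t = Real.pi/2 + ((j0 : ℝ) + k) * Real.pi := by
    intro k hk
    obtain ⟨hg1, hg2⟩ := hgrid k hk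
    have hmem : Real.pi/2 + ((j0 : ℝ) + k) * Real.pi ∈ Set.uIcc (φ 0) (φ 1) := by
      rw [Set.uIcc]
      exact ⟨hg1.le, hg2.le⟩
    have hφ' : ContinuousOn φ (Set.uIcc (0:ℝ) 1) := by
      rwa [Set.uIcc_of_le zero_le_one]
    obtain ⟨t, ht, hφt⟩ := intermediate_value_uIcc hφ' hmem
    rw [Set.uIcc_of_le zero_le_one] at ht
    exact ⟨t, ht, hφt⟩
  choose t ht hφt using fun k : Fin (ℓ+1) => hval k (Nat.lt_succ_iff.mp k.2)
  have htinj : Function.Injective t := by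
    intro k k' hkk'
    have : φ (t k) = φ (t k') := by rw [hkk']
    rw [hφt k, hφt k'] at this
    have : (k : ℝ) = (k' : ℝ) := by
      have hπ0 : Real.pi ≠ 0 := hπ.ne'
      field_simp at this
      linarith
    exact Fin.ext (by exact_mod_cast this)
  have hγinj : Function.Injective γ := by
    intro a b hab
    have hab' : (a : ℂ) * c = (b : ℂ) * c := by
      have : z1 + (a : ℂ) * c = z1 + (b : ℂ) * c := hab
      exact add_left_cancel this
    have := mul_right_cancel₀ hc0 hab'
    exact_mod_cast this
  have hmemS : ∀ k : Fin (ℓ+1), γ (t k) ∈ {z ∈ segment ℝ z1 z2 | (f z).re = 0} := by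
    intro k
    refine ⟨hγmem _ (ht k), ?_⟩
    rw [hre _ (ht k), hφt k]
    have : Real.cos (Real.pi/2 + ((j0 : ℝ) + k) * Real.pi) = 0 := by
      rw [Real.cos_eq_zero_iff]
      exact ⟨j0 + k, by push_cast; ring⟩
    rw [this, mul_zero]
  have hfinal : ℓ + 1 ≤ ℓ := by
    have hinj : Function.Injective (fun k : Fin (ℓ+1) => γ (t k)) :=
      hγinj.comp htinj
    calc ℓ + 1 = (Finset.image (fun k : Fin (ℓ+1) => γ (t k)) Finset.univ).card := by
          rw [Finset.card_image_of_injective _ hinj, Finset.card_univ, Fintype.card_fin]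
      _ = ((Finset.image (fun k : Fin (ℓ+1) => γ (t k)) Finset.univ : Finset ℂ) : Set ℂ).ncard :=
          (Set.ncard_coe_finset _).symm
      _ ≤ {z ∈ segment ℝ z1 z2 | (f z).re = 0}.ncard := by
          apply Set.ncard_le_ncard _ hfin
          intro z hz
          simp only [Finset.coe_image, Finset.coe_univ, Set.image_univ, Set.mem_range] at hz
          obtain ⟨k, hk⟩ := hz
          exact hk ▸ hmemS k
      _ = ℓ := hcard
  omega
end
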